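/- arXiv:1407.3230 — 7 statements merged into one kernel-verified Lean document; each statement's English description precedes it below -/
import Mathlib

section
/- For every set system F ⊆ 2^[n], the number of subsets of [n] strongly shattered by F is at most |F|, i.e. |st(F)| ≤ |F|. -/
open scoped symmDiff

/-- `𝓕` shatters `S`: every subset of `S` is the trace of some member of `𝓕` on `S`. -/
def Shatters {n : ℕ} (𝓕 : Finset (Finset (Fin n))) (S : Finset (Fin n)) : Prop :=
  ∀ T ⊆ S, ∃ F ∈ 𝓕, F ∩ S = T

/-- `𝓕` strongly shatters `S`: there is `I ⊆ [n] \ S` with `{H ∪ I : H ⊆ S} ⊆ 𝓕`. -/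
def StronglyShatters {n : ℕ} (𝓕 : Finset (Finset (Fin n))) (S : Finset (Fin n)) : Prop :=
  ∃ I : Finset (Fin n), I ⊆ Sᶜ ∧ ∀ H ⊆ S, H ∪ I ∈ 𝓕

open Classical in
/-- The family of subsets of `[n]` shattered by `𝓕`. -/
noncomputable def Sh {n : ℕ} (𝓕 : Finset (Finset (Fin n))) : Finset (Finset (Fin n)) :=
  Finset.univ.filter (Shatters 𝓕)

open Classical in
/-- The family of subsets of `[n]` strongly shattered by `𝓕`. -/
noncomputable def st {n : ℕ} (𝓕 : Finset (Finset (Fin n))) : Finset (Finset (Fin n)) :=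
  Finset.univ.filter (StronglyShatters 𝓕)

/-- `𝓕` is shattering-extremal if it shatters exactly `|𝓕|` sets. -/
def Extremal {n : ℕ} (𝓕 : Finset (Finset (Fin n))) : Prop :=
  (Sh 𝓕).card = 𝓕.card

/-- The Vapnik–Chervonenkis dimension: the maximum cardinality of a shattered set. -/
noncomputable def dimVC {n : ℕ} (𝓕 : Finset (Finset (Fin n))) : ℕ :=
  (Sh 𝓕).sup Finset.card

lemma mem_st {n : ℕ} {𝓕 : Finset (Finset (Fin n))} {S : Finset (Fin n)} :
    S ∈ st 𝓕 ↔ StronglyShatters 𝓕 S := by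
  classical simp [st]

lemma reverse_sauer_aux {n : ℕ} (U : Finset (Fin n)) :
    ∀ 𝓕 : Finset (Finset (Fin n)), (∀ A ∈ 𝓕, A ⊆ U) → (st 𝓕).card ≤ 𝓕.card := by
  classical
  induction U using Finset.induction_on with
  | empty =>
    intro F hF
    rcases Finset.eq_empty_or_nonempty (st F) with h | ⟨S, hS⟩
    · simp [h]
    · have hSS := mem_st.1 hS
      obtain ⟨I, hI, hmem⟩ := hSS
      have hIF : I ∈ F := by simpa using hmem ∅ (by simp)
      have hFne : F.Nonempty := ⟨I, hIF⟩
      have hsub : st F ⊆ {∅} := by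
        intro T hT
        obtain ⟨J, hJ, hm⟩ := mem_st.1 hT
        have : T ∪ J ∈ F := hm T (le_refl _)
        have : T ∪ J ⊆ (∅ : Finset (Fin n)) := hF _ this
        simp only [Finset.mem_singleton]
        have := Finset.union_eq_empty.mp (Finset.subset_empty.mp this)
        exact this.1
      calc (st F).card ≤ ({∅} : Finset (Finset (Fin n))).card := Finset.card_le_card hsub
        _ = 1 := by simp
        _ ≤ F.card := Finset.one_le_card.mpr hFne
  | @insert x U' hx ih =>
    intro F hF
    set F1' := F.filter (fun A => x ∈ A) with hF1'def
    set F0 := F.filter (fun A => x ∉ A) with hF0def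
    set F1 := F1'.image (fun A => A.erase x) with hF1def
    have hsplit : F1'.card + F0.card = F.card :=
      Finset.card_filter_add_card_filter_not (p := fun A => x ∈ A)
    have hcard1 : F1.card = F1'.card := by
      apply Finset.card_image_of_injOn
      intro A hA B hB hAB
      have hxA : x ∈ A := (Finset.mem_filter.1 hA).2
      have hxB : x ∈ B := (Finset.mem_filter.1 hB).2
      have : insert x (A.erase x) = insert x (B.erase x) := congrArg (insert x) hAB
      rwa [Finset.insert_erase hxA, Finset.insert_erase hxB] at this
    have hF0U : ∀ A ∈ F0, A ⊆ U' := by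
      intro A hA a ha
      have h1 := Finset.mem_filter.1 hA
      have := hF A h1.1 ha
      rcases Finset.mem_insert.1 this with h | h
      · exact absurd (h ▸ ha) h1.2
      · exact h
    have hF1U : ∀ A ∈ F1, A ⊆ U' := by
      intro A hA a ha
      obtain ⟨B, hB, rfl⟩ := Finset.mem_image.1 hA
      have h1 := Finset.mem_filter.1 hB
      have hane : a ≠ x := Finset.ne_of_mem_erase ha
      have := hF B h1.1 (Finset.mem_of_mem_erase ha)
      rcases Finset.mem_insert.1 this with h | h
      · exact absurd h hane
      · exact h
    -- claim (a)
    have hA : (st F).filter (fun S => x ∉ S) ⊆ st F0 ∪ st F1 := by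
      intro S hS
      obtain ⟨hSst, hxS⟩ := Finset.mem_filter.1 hS
      obtain ⟨I, hI, hm⟩ := mem_st.1 hSst
      by_cases hxI : x ∈ I
      · refine Finset.mem_union_right _ (mem_st.2 ⟨I.erase x, ?_, ?_⟩)
        · exact (Finset.erase_subset _ _).trans hI
        · intro H hH
          have hxH : x ∉ H := fun h => hxS (hH h)
          have hmem : H ∪ I ∈ F1' :=
            Finset.mem_filter.2 ⟨hm H hH, Finset.mem_union_right _ hxI⟩
          refine Finset.mem_image.2 ⟨H ∪ I, hmem, ?_⟩
          rw [Finset.erase_union_distrib, Finset.erase_eq_of_notMem hxH]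
      · refine Finset.mem_union_left _ (mem_st.2 ⟨I, hI, ?_⟩)
        intro H hH
        have hxH : x ∉ H := fun h => hxS (hH h)
        exact Finset.mem_filter.2 ⟨hm H hH, fun h => (Finset.mem_union.1 h).elim hxH hxI⟩
    -- claim (b)
    have hB : ((st F).filter (fun S => x ∈ S)).image (fun S => S.erase x)
        ⊆ st F0 ∩ st F1 := by
      intro T hT
      obtain ⟨S, hS, rfl⟩ := Finset.mem_image.1 hT
      obtain ⟨hSst, hxS⟩ := Finset.mem_filter.1 hS
      obtain ⟨I, hI, hm⟩ := mem_st.1 hSst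
      have hxI : x ∉ I := fun h => (Finset.mem_compl.1 (hI h)) hxS
      have hIc : I ⊆ (S.erase x)ᶜ := by
        intro a ha
        have : a ∉ S := by simpa using hI ha
        simp only [Finset.mem_compl, Finset.mem_erase]
        exact fun h => this h.2
      refine Finset.mem_inter.2 ⟨mem_st.2 ⟨I, hIc, ?_⟩, mem_st.2 ⟨I, hIc, ?_⟩⟩
      · intro H hH
        have hHS : H ⊆ S := hH.trans (Finset.erase_subset _ _)
        have hxH : x ∉ H := fun h => by simpa using hH h
        exact Finset.mem_filter.2 ⟨hm H hHS, fun h => (Finset.mem_union.1 h).elim hxH hxI⟩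
      · intro H hH
        have hxH : x ∉ H := fun h => by simpa using hH h
        have hHS : insert x H ⊆ S := Finset.insert_subset hxS (hH.trans (Finset.erase_subset _ _))
        have hmem : insert x H ∪ I ∈ F1' :=
          Finset.mem_filter.2 ⟨hm _ hHS, Finset.mem_union_left _ (Finset.mem_insert_self _ _)⟩
        refine Finset.mem_image.2 ⟨insert x H ∪ I, hmem, ?_⟩
        rw [Finset.insert_union, Finset.erase_insert (fun h => (Finset.mem_union.1 h).elim hxH hxI)]
    -- counting
    have hsplitst : ((st F).filter (fun S => x ∈ S)).card
        + ((st F).filter (fun S => x ∉ S)).card = (st F).card :=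
      Finset.card_filter_add_card_filter_not (p := fun S => x ∈ S)
    have himg : (((st F).filter (fun S => x ∈ S)).image (fun S => S.erase x)).card
        = ((st F).filter (fun S => x ∈ S)).card := by
      apply Finset.card_image_of_injOn
      intro A hA B hB hAB
      have hxA : x ∈ A := (Finset.mem_filter.1 hA).2
      have hxB : x ∈ B := (Finset.mem_filter.1 hB).2
      have : insert x (A.erase x) = insert x (B.erase x) := congrArg (insert x) hAB
      rwa [Finset.insert_erase hxA, Finset.insert_erase hxB] at this
    calc (st F).card
        = ((st F).filter (fun S => x ∈ S)).card + ((st F).filter (fun S => x ∉ S)).card :=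
          hsplitst.symm
      _ ≤ (st F0 ∩ st F1).card + (st F0 ∪ st F1).card := by
          exact add_le_add (himg ▸ Finset.card_le_card hB) (Finset.card_le_card hA)
      _ = (st F0).card + (st F1).card := by
          rw [add_comm, Finset.card_union_add_card_inter]
      _ ≤ F0.card + F1.card := add_le_add (ih F0 hF0U) (ih F1 hF1U)
      _ = F.card := by rw [hcard1, add_comm]; exact hsplit

/-- Reverse Sauer inequality: every set system strongly shatters at most `|𝓕|` sets. -/
theorem reverse_sauer_inequality (n : ℕ) (𝓕 : Finset (Finset (Fin n))) :
    (st 𝓕).card ≤ 𝓕.card :=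
  reverse_sauer_aux Finset.univ 𝓕 (fun _ _ => Finset.subset_univ _)
end

section
/- For every set system F ⊆ 2^[n], equality holds in the Sauer inequality if and only if it holds in the reverse Sauer inequality: |Sh(F)| = |F| if and only if |st(F)| = |F|. -/
open scoped symmDiff

section AuxBR


/-- strong shattering phrased with `Disjoint`. -/
def SSh {n : ℕ} (𝓕 : Finset (Finset (Fin n))) (S : Finset (Fin n)) : Prop :=
  ∃ I : Finset (Fin n), Disjoint I S ∧ ∀ H ⊆ S, H ∪ I ∈ 𝓕

open Classical in
noncomputable def ShG {n : ℕ} (A : Finset (Fin n)) (𝓕 : Finset (Finset (Fin n))) :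
    Finset (Finset (Fin n)) := A.powerset.filter (Shatters 𝓕)

open Classical in
noncomputable def stG {n : ℕ} (A : Finset (Fin n)) (𝓕 : Finset (Finset (Fin n))) :
    Finset (Finset (Fin n)) := A.powerset.filter (SSh 𝓕)

lemma mem_ShG {n : ℕ} {A S : Finset (Fin n)} {𝓕 : Finset (Finset (Fin n))} :
    S ∈ ShG A 𝓕 ↔ S ⊆ A ∧ Shatters 𝓕 S := by
  simp [ShG, Finset.mem_filter, Finset.mem_powerset]

lemma mem_stG {n : ℕ} {A S : Finset (Fin n)} {𝓕 : Finset (Finset (Fin n))} :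
    S ∈ stG A 𝓕 ↔ S ⊆ A ∧ SSh 𝓕 S := by
  simp [stG, Finset.mem_filter, Finset.mem_powerset]

lemma SSh.shatters {n : ℕ} {𝓕 : Finset (Finset (Fin n))} {S : Finset (Fin n)}
    (h : SSh 𝓕 S) : Shatters 𝓕 S := by
  obtain ⟨I, hdis, hI⟩ := h
  intro T hT
  refine ⟨T ∪ I, hI T hT, ?_⟩
  have : I ∩ S = ∅ := Finset.disjoint_iff_inter_eq_empty.1 hdis
  rw [Finset.union_inter_distrib_right, Finset.inter_eq_left.2 hT, this, Finset.union_empty]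

lemma stG_subset_ShG {n : ℕ} (A : Finset (Fin n)) (𝓕 : Finset (Finset (Fin n))) :
    stG A 𝓕 ⊆ ShG A 𝓕 := by
  intro S hS
  rw [mem_stG] at hS
  exact mem_ShG.2 ⟨hS.1, hS.2.shatters⟩

/-- trace family -/
noncomputable def Fd {n : ℕ} (x : Fin n) (𝓕 : Finset (Finset (Fin n))) :
    Finset (Finset (Fin n)) := 𝓕.image (fun F => F.erase x)

open Classical in
/-- "both" family -/
noncomputable def Fc {n : ℕ} (x : Fin n) (𝓕 : Finset (Finset (Fin n))) :
    Finset (Finset (Fin n)) := 𝓕.filter (fun G => x ∉ G ∧ insert x G ∈ 𝓕)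

lemma mem_Fc {n : ℕ} {x : Fin n} {𝓕 : Finset (Finset (Fin n))} {G : Finset (Fin n)} :
    G ∈ Fc x 𝓕 ↔ G ∈ 𝓕 ∧ x ∉ G ∧ insert x G ∈ 𝓕 := by
  simp [Fc, Finset.mem_filter]

lemma Fd_subset {n : ℕ} {x : Fin n} {A : Finset (Fin n)} {𝓕 : Finset (Finset (Fin n))}
    (h : 𝓕 ⊆ A.powerset) : Fd x 𝓕 ⊆ (A.erase x).powerset := by
  intro G hG
  obtain ⟨F, hF, rfl⟩ := Finset.mem_image.1 hG
  exact Finset.mem_powerset.2 (Finset.erase_subset_erase x (Finset.mem_powerset.1 (h hF)))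

lemma Fc_subset {n : ℕ} {x : Fin n} {A : Finset (Fin n)} {𝓕 : Finset (Finset (Fin n))}
    (h : 𝓕 ⊆ A.powerset) : Fc x 𝓕 ⊆ (A.erase x).powerset := by
  intro G hG
  rw [mem_Fc] at hG
  exact Finset.mem_powerset.2 (Finset.subset_erase.2 ⟨Finset.mem_powerset.1 (h hG.1), hG.2.1⟩)

lemma card_Fd_add_Fc {n : ℕ} (x : Fin n) (𝓕 : Finset (Finset (Fin n))) :
    (Fd x 𝓕).card + (Fc x 𝓕).card = 𝓕.card := by
  classical
  set 𝓕₁ := 𝓕.filter (fun F => x ∈ F) with h𝓕₁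
  set 𝓕₀ := 𝓕.filter (fun F => ¬ x ∈ F) with h𝓕₀
  have h1 : Fd x 𝓕 = 𝓕₀ ∪ 𝓕₁.image (fun F => F.erase x) := by
    ext G
    simp only [Fd, Finset.mem_image, Finset.mem_union, Finset.mem_filter, h𝓕₀, h𝓕₁]
    constructor
    · rintro ⟨F, hF, rfl⟩
      by_cases hx : x ∈ F
      · exact Or.inr ⟨F, ⟨hF, hx⟩, rfl⟩
      · rw [Finset.erase_eq_of_notMem hx]; exact Or.inl ⟨hF, hx⟩
    · rintro (⟨hG, hx⟩ | ⟨F, ⟨hF, hx⟩, rfl⟩)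
      · exact ⟨G, hG, Finset.erase_eq_of_notMem hx⟩
      · exact ⟨F, hF, rfl⟩
  have h2 : Fc x 𝓕 = 𝓕₀ ∩ 𝓕₁.image (fun F => F.erase x) := by
    ext G
    simp only [mem_Fc, Finset.mem_inter, Finset.mem_image, Finset.mem_filter, h𝓕₀, h𝓕₁]
    constructor
    · rintro ⟨hG, hx, hins⟩
      exact ⟨⟨hG, hx⟩, insert x G, ⟨hins, Finset.mem_insert_self x G⟩,
        Finset.erase_insert hx⟩
    · rintro ⟨⟨hG, hx⟩, F, ⟨hF, hxF⟩, rfl⟩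
      refine ⟨hG, hx, ?_⟩
      rwa [Finset.insert_erase hxF]
  have himg : (𝓕₁.image (fun F => F.erase x)).card = 𝓕₁.card := by
    apply Finset.card_image_of_injOn
    intro F hF F' hF' hEq
    have hxF : x ∈ F := (Finset.mem_filter.1 hF).2
    have hxF' : x ∈ F' := (Finset.mem_filter.1 hF').2
    simp only at hEq
    rw [← Finset.insert_erase hxF, ← Finset.insert_erase hxF', hEq]
  have := Finset.card_union_add_card_inter 𝓕₀ (𝓕₁.image (fun F => F.erase x))
  rw [h1, h2, this, himg]
  rw [add_comm (𝓕₀.card)]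
  exact Finset.card_filter_add_card_filter_not _
-- L2
lemma shatters_Fd_lift {n : ℕ} {x : Fin n} {𝓕 : Finset (Finset (Fin n))} {S : Finset (Fin n)}
    (hx : x ∉ S) (h : Shatters (Fd x 𝓕) S) : Shatters 𝓕 S := by
  intro T hT
  obtain ⟨G, hG, hGS⟩ := h T hT
  obtain ⟨F, hF, rfl⟩ := Finset.mem_image.1 hG
  refine ⟨F, hF, ?_⟩
  rw [← hGS]
  ext a
  simp only [Finset.mem_inter, Finset.mem_erase]
  constructor
  · rintro ⟨ha, haS⟩
    exact ⟨⟨fun h => hx (h ▸ haS), ha⟩, haS⟩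
  · rintro ⟨⟨_, ha⟩, haS⟩
    exact ⟨ha, haS⟩

-- L3
lemma shatters_Fc_lift {n : ℕ} {x : Fin n} {𝓕 : Finset (Finset (Fin n))} {S : Finset (Fin n)}
    (hx : x ∉ S) (h : Shatters (Fc x 𝓕) S) : Shatters 𝓕 (insert x S) := by
  intro T hT
  have hTS : T.erase x ⊆ S := by
    intro a ha
    rcases Finset.mem_insert.1 (hT (Finset.erase_subset x T ha)) with h1 | h1
    · exact absurd h1 (Finset.ne_of_mem_erase ha)
    · exact h1
  obtain ⟨G, hG, hGS⟩ := h (T.erase x) hTS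
  rw [mem_Fc] at hG
  by_cases hxT : x ∈ T
  · refine ⟨insert x G, hG.2.2, ?_⟩
    ext a
    simp only [Finset.mem_inter, Finset.mem_insert]
    constructor
    · rintro ⟨h1 | h1, h2 | h2⟩
      · exact h1 ▸ hxT
      · exact h1 ▸ hxT
      · exact h2 ▸ hxT
      · have : a ∈ G ∩ S := Finset.mem_inter.2 ⟨h1, h2⟩
        exact Finset.mem_of_mem_erase (hGS ▸ this)
    · intro haT
      by_cases hax : a = x
      · exact ⟨Or.inl hax, Or.inl hax⟩
      · have : a ∈ T.erase x := Finset.mem_erase.2 ⟨hax, haT⟩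
        rw [← hGS] at this
        exact ⟨Or.inr (Finset.mem_inter.1 this).1, Or.inr (Finset.mem_inter.1 this).2⟩
  · refine ⟨G, hG.1, ?_⟩
    have hTe : T.erase x = T := Finset.erase_eq_of_notMem hxT
    rw [hTe] at hGS
    ext a
    simp only [Finset.mem_inter, Finset.mem_insert]
    constructor
    · rintro ⟨h1, h2 | h2⟩
      · exact absurd (h2 ▸ h1) hG.2.1
      · exact hGS ▸ Finset.mem_inter.2 ⟨h1, h2⟩
    · intro haT
      have := hGS ▸ haT
      exact ⟨(Finset.mem_inter.1 this).1, Or.inr (Finset.mem_inter.1 this).2⟩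

-- L7
lemma shatters_to_Fd {n : ℕ} {x : Fin n} {𝓕 : Finset (Finset (Fin n))} {S : Finset (Fin n)}
    (hx : x ∉ S) (h : Shatters 𝓕 S) : Shatters (Fd x 𝓕) S := by
  intro T hT
  obtain ⟨F, hF, hFS⟩ := h T hT
  refine ⟨F.erase x, Finset.mem_image_of_mem _ hF, ?_⟩
  rw [← hFS]
  ext a
  simp only [Finset.mem_inter, Finset.mem_erase]
  constructor
  · rintro ⟨⟨_, h1⟩, h2⟩; exact ⟨h1, h2⟩
  · rintro ⟨h1, h2⟩; exact ⟨⟨fun he => hx (he ▸ h2), h1⟩, h2⟩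

-- L4
lemma ssh_to_Fd {n : ℕ} {x : Fin n} {𝓕 : Finset (Finset (Fin n))} {S : Finset (Fin n)}
    (hx : x ∉ S) (h : SSh 𝓕 S) : SSh (Fd x 𝓕) S := by
  obtain ⟨I, hdis, hI⟩ := h
  refine ⟨I.erase x, Finset.disjoint_of_subset_left (Finset.erase_subset x I) hdis, ?_⟩
  intro H hH
  have hxH : x ∉ H := fun hh => hx (hH hh)
  have : H ∪ I.erase x = (H ∪ I).erase x := by
    rw [Finset.erase_union_distrib, Finset.erase_eq_of_notMem hxH]
  rw [this]
  exact Finset.mem_image_of_mem _ (hI H hH)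

-- L5
lemma ssh_to_Fc {n : ℕ} {x : Fin n} {𝓕 : Finset (Finset (Fin n))} {S : Finset (Fin n)}
    (hx : x ∈ S) (h : SSh 𝓕 S) : SSh (Fc x 𝓕) (S.erase x) := by
  obtain ⟨I, hdis, hI⟩ := h
  refine ⟨I, Finset.disjoint_of_subset_right (Finset.erase_subset x S) hdis, ?_⟩
  intro H hH
  have hHS : H ⊆ S := hH.trans (Finset.erase_subset x S)
  have hxI : x ∉ I := Finset.disjoint_right.1 hdis hx
  have hxH : x ∉ H := fun hh => (Finset.mem_erase.1 (hH hh)).1 rfl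
  rw [mem_Fc]
  refine ⟨hI H hHS, by simp [hxI, hxH], ?_⟩
  have : insert x (H ∪ I) = (insert x H) ∪ I := by
    rw [Finset.insert_union]
  rw [this]
  exact hI _ (Finset.insert_subset hx hHS)

-- L6
lemma ssh_Fc_lift {n : ℕ} {x : Fin n} {𝓕 : Finset (Finset (Fin n))} {S : Finset (Fin n)}
    (hx : x ∉ S) (h : SSh (Fc x 𝓕) S) : SSh 𝓕 (insert x S) := by
  obtain ⟨I, hdis, hI⟩ := h
  have hIFc : I ∈ Fc x 𝓕 := by
    have := hI ∅ (Finset.empty_subset S)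
    rwa [Finset.empty_union] at this
  have hxI : x ∉ I := (mem_Fc.1 hIFc).2.1
  refine ⟨I, Finset.disjoint_insert_right.2 ⟨hxI, hdis⟩, ?_⟩
  intro H hH
  by_cases hxH : x ∈ H
  · have hHe : H.erase x ⊆ S := by
      intro a ha
      rcases Finset.mem_insert.1 (hH (Finset.erase_subset x H ha)) with h1 | h1
      · exact absurd h1 (Finset.ne_of_mem_erase ha)
      · exact h1
    have := (mem_Fc.1 (hI _ hHe)).2.2
    have heq : insert x (H.erase x ∪ I) = H ∪ I := by
      rw [← Finset.insert_union, Finset.insert_erase hxH]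
    rwa [heq] at this
  · have hHS : H ⊆ S := fun a ha => by
      rcases Finset.mem_insert.1 (hH ha) with h1 | h1
      · exact absurd (h1 ▸ ha) hxH
      · exact h1
    exact (mem_Fc.1 (hI H hHS)).1
lemma ShG_subset_powerset {n : ℕ} {A : Finset (Fin n)} {𝓕 : Finset (Finset (Fin n))} :
    ShG A 𝓕 ⊆ A.powerset := fun S hS => Finset.mem_powerset.2 (mem_ShG.1 hS).1

lemma stG_subset_powerset {n : ℕ} {A : Finset (Fin n)} {𝓕 : Finset (Finset (Fin n))} :
    stG A 𝓕 ⊆ A.powerset := fun S hS => Finset.mem_powerset.2 (mem_stG.1 hS).1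

lemma card_union_insert {n : ℕ} {x : Fin n} {B : Finset (Fin n)} (hxB : x ∉ B)
    {𝒜 𝒝 : Finset (Finset (Fin n))} (h𝒜 : 𝒜 ⊆ B.powerset) (h𝒝 : 𝒝 ⊆ B.powerset) :
    (𝒜 ∪ 𝒝.image (fun S => insert x S)).card = 𝒜.card + 𝒝.card := by
  classical
  have hdis : Disjoint 𝒜 (𝒝.image (fun S => insert x S)) := by
    rw [Finset.disjoint_right]
    rintro S hS hS'
    obtain ⟨S₀, hS₀, rfl⟩ := Finset.mem_image.1 hS
    exact hxB (Finset.mem_powerset.1 (h𝒜 hS') (Finset.mem_insert_self x S₀))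
  rw [Finset.card_union_of_disjoint hdis]
  congr 1
  apply Finset.card_image_of_injOn
  intro S hS S' hS' hEq
  have hxS : x ∉ S := fun h => hxB (Finset.mem_powerset.1 (h𝒝 hS) h)
  have hxS' : x ∉ S' := fun h => hxB (Finset.mem_powerset.1 (h𝒝 hS') h)
  simp only at hEq
  rw [← Finset.erase_insert hxS, ← Finset.erase_insert hxS', hEq]

lemma U_subset_ShG {n : ℕ} {x : Fin n} {A : Finset (Fin n)} {𝓕 : Finset (Finset (Fin n))}
    (hx : x ∈ A) :
    ShG (A.erase x) (Fd x 𝓕) ∪ (ShG (A.erase x) (Fc x 𝓕)).image (fun S => insert x S)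
      ⊆ ShG A 𝓕 := by
  intro S hS
  rcases Finset.mem_union.1 hS with hS | hS
  · rw [mem_ShG] at hS ⊢
    have hxS : x ∉ S := fun h => (Finset.mem_erase.1 (hS.1 h)).1 rfl
    exact ⟨hS.1.trans (Finset.erase_subset x A), shatters_Fd_lift hxS hS.2⟩
  · obtain ⟨S₀, hS₀, rfl⟩ := Finset.mem_image.1 hS
    rw [mem_ShG] at hS₀ ⊢
    have hxS₀ : x ∉ S₀ := fun h => (Finset.mem_erase.1 (hS₀.1 h)).1 rfl
    exact ⟨Finset.insert_subset hx (hS₀.1.trans (Finset.erase_subset x A)),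
      shatters_Fc_lift hxS₀ hS₀.2⟩

lemma stG_subset_union {n : ℕ} {x : Fin n} {A : Finset (Fin n)} {𝓕 : Finset (Finset (Fin n))} :
    stG A 𝓕 ⊆
      stG (A.erase x) (Fd x 𝓕) ∪ (stG (A.erase x) (Fc x 𝓕)).image (fun S => insert x S) := by
  intro S hS
  rw [mem_stG] at hS
  by_cases hxS : x ∈ S
  · refine Finset.mem_union_right _ (Finset.mem_image.2 ⟨S.erase x, ?_, Finset.insert_erase hxS⟩)
    rw [mem_stG]
    exact ⟨Finset.erase_subset_erase x hS.1, ssh_to_Fc hxS hS.2⟩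
  · refine Finset.mem_union_left _ ?_
    rw [mem_stG]
    exact ⟨Finset.subset_erase.2 ⟨hS.1, hxS⟩, ssh_to_Fd hxS hS.2⟩

lemma ssh_nonempty {n : ℕ} {𝓕 : Finset (Finset (Fin n))} {S : Finset (Fin n)}
    (h : SSh 𝓕 S) : 𝓕.Nonempty := by
  obtain ⟨I, _, hI⟩ := h
  exact ⟨∅ ∪ I, hI ∅ (Finset.empty_subset S)⟩

lemma pajor {n : ℕ} : ∀ (k : ℕ) (A : Finset (Fin n)) (𝓕 : Finset (Finset (Fin n))),
    A.card = k → 𝓕 ⊆ A.powerset → 𝓕.card ≤ (ShG A 𝓕).card := by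
  intro k
  induction k using Nat.strong_induction_on with
  | _ k ih =>
    intro A 𝓕 hk hsub
    rcases A.eq_empty_or_nonempty with rfl | ⟨x, hx⟩
    · rcases 𝓕.eq_empty_or_nonempty with rfl | hne
      · simp
      · have h1 : 𝓕.card ≤ 1 := by
          simpa using Finset.card_le_card hsub
        have h2 : (∅ : Finset (Fin n)) ∈ ShG ∅ 𝓕 := by
          rw [mem_ShG]
          refine ⟨Finset.Subset.refl _, fun T hT => ?_⟩
          rw [Finset.subset_empty.1 hT]
          exact ⟨hne.choose, hne.choose_spec, Finset.inter_empty _⟩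
        exact h1.trans (Finset.card_le_card (Finset.singleton_subset_iff.2 h2))
    · set B := A.erase x with hB
      have hBcard : B.card < k := by
        have h0 : 0 < k := hk ▸ Finset.card_pos.2 ⟨x, hx⟩
        rw [hB, Finset.card_erase_of_mem hx, hk]
        omega
      have hxB : x ∉ B := Finset.notMem_erase x A
      have ihd := ih B.card hBcard B (Fd x 𝓕) rfl (Fd_subset hsub)
      have ihc := ih B.card hBcard B (Fc x 𝓕) rfl (Fc_subset hsub)
      have hcardU := card_union_insert hxB
        (ShG_subset_powerset (A := B) (𝓕 := Fd x 𝓕))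
        (ShG_subset_powerset (A := B) (𝓕 := Fc x 𝓕))
      calc 𝓕.card = (Fd x 𝓕).card + (Fc x 𝓕).card := (card_Fd_add_Fc x 𝓕).symm
        _ ≤ (ShG B (Fd x 𝓕)).card + (ShG B (Fc x 𝓕)).card := Nat.add_le_add ihd ihc
        _ = (ShG B (Fd x 𝓕) ∪ (ShG B (Fc x 𝓕)).image (fun S => insert x S)).card :=
            hcardU.symm
        _ ≤ (ShG A 𝓕).card := Finset.card_le_card (U_subset_ShG hx)

lemma reverse_sauer {n : ℕ} : ∀ (k : ℕ) (A : Finset (Fin n)) (𝓕 : Finset (Finset (Fin n))),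
    A.card = k → 𝓕 ⊆ A.powerset → (stG A 𝓕).card ≤ 𝓕.card := by
  intro k
  induction k using Nat.strong_induction_on with
  | _ k ih =>
    intro A 𝓕 hk hsub
    rcases A.eq_empty_or_nonempty with rfl | ⟨x, hx⟩
    · rcases 𝓕.eq_empty_or_nonempty with rfl | hne
      · have : stG (∅ : Finset (Fin n)) (∅ : Finset (Finset (Fin n))) = ∅ := by
          rw [Finset.eq_empty_iff_forall_notMem]
          intro S hS
          exact Finset.not_nonempty_empty (ssh_nonempty (mem_stG.1 hS).2)
        simp [this]
      · have h1 : (stG ∅ 𝓕).card ≤ 1 := by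
          have : stG (∅ : Finset (Fin n)) 𝓕 ⊆ (∅ : Finset (Fin n)).powerset :=
            stG_subset_powerset
          simpa using Finset.card_le_card this
        exact h1.trans (Finset.card_pos.2 hne)
    · set B := A.erase x with hB
      have hBcard : B.card < k := by
        have h0 : 0 < k := hk ▸ Finset.card_pos.2 ⟨x, hx⟩
        rw [hB, Finset.card_erase_of_mem hx, hk]
        omega
      have ihd := ih B.card hBcard B (Fd x 𝓕) rfl (Fd_subset hsub)
      have ihc := ih B.card hBcard B (Fc x 𝓕) rfl (Fc_subset hsub)
      calc (stG A 𝓕).card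
          ≤ (stG B (Fd x 𝓕) ∪ (stG B (Fc x 𝓕)).image (fun S => insert x S)).card :=
            Finset.card_le_card stG_subset_union
        _ ≤ (stG B (Fd x 𝓕)).card + ((stG B (Fc x 𝓕)).image (fun S => insert x S)).card :=
            Finset.card_union_le _ _
        _ ≤ (stG B (Fd x 𝓕)).card + (stG B (Fc x 𝓕)).card :=
            Nat.add_le_add le_rfl (Finset.card_image_le)
        _ ≤ (Fd x 𝓕).card + (Fc x 𝓕).card := Nat.add_le_add ihd ihc
        _ = 𝓕.card := card_Fd_add_Fc x 𝓕
lemma sh_extremal_ssh {n : ℕ} : ∀ (k : ℕ) (A : Finset (Fin n)) (𝓕 : Finset (Finset (Fin n))),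
    A.card = k → 𝓕 ⊆ A.powerset → (ShG A 𝓕).card = 𝓕.card →
    ∀ S ∈ ShG A 𝓕, SSh 𝓕 S := by
  intro k
  induction k using Nat.strong_induction_on with
  | _ k ih =>
    intro A 𝓕 hk hsub hext S hS
    rw [mem_ShG] at hS
    rcases S.eq_empty_or_nonempty with rfl | ⟨x, hxS⟩
    · obtain ⟨F, hF, -⟩ := hS.2 ∅ (Finset.Subset.refl _)
      refine ⟨F, Finset.disjoint_empty_right F, fun H hH => ?_⟩
      rw [Finset.subset_empty.1 hH, Finset.empty_union]
      exact hF
    · have hx : x ∈ A := hS.1 hxS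
      set B := A.erase x with hB
      have hBcard : B.card < k := by
        have h0 : 0 < k := hk ▸ Finset.card_pos.2 ⟨x, hx⟩
        rw [hB, Finset.card_erase_of_mem hx, hk]
        omega
      have hxB : x ∉ B := Finset.notMem_erase x A
      set 𝒜 := ShG B (Fd x 𝓕) with h𝒜
      set 𝒝 := ShG B (Fc x 𝓕) with h𝒝
      set U := 𝒜 ∪ 𝒝.image (fun S => insert x S) with hU
      have hUsub : U ⊆ ShG A 𝓕 := U_subset_ShG hx
      have hcardU : U.card = 𝒜.card + 𝒝.card :=
        card_union_insert hxB ShG_subset_powerset ShG_subset_powerset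
      have hpd : (Fd x 𝓕).card ≤ 𝒜.card := pajor B.card B _ rfl (Fd_subset hsub)
      have hpc : (Fc x 𝓕).card ≤ 𝒝.card := pajor B.card B _ rfl (Fc_subset hsub)
      have hFdc : (Fd x 𝓕).card + (Fc x 𝓕).card = 𝓕.card := card_Fd_add_Fc x 𝓕
      have hUle : U.card ≤ (ShG A 𝓕).card := Finset.card_le_card hUsub
      have hUeq : U = ShG A 𝓕 := by
        apply Finset.eq_of_subset_of_card_le hUsub
        omega
      have h𝒝eq : 𝒝.card = (Fc x 𝓕).card := by omega
      have hSU : S ∈ U := hUeq ▸ mem_ShG.2 hS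
      have hSim : S ∈ 𝒝.image (fun S => insert x S) := by
        rcases Finset.mem_union.1 hSU with h | h
        · exact absurd hxS fun _ => hxB ((Finset.mem_powerset.1 (ShG_subset_powerset h)) hxS)
        · exact h
      obtain ⟨S₀, hS₀, rfl⟩ := Finset.mem_image.1 hSim
      have hxS₀ : x ∉ S₀ := fun h => hxB (Finset.mem_powerset.1 (ShG_subset_powerset hS₀) h)
      have hssh : SSh (Fc x 𝓕) S₀ :=
        ih B.card hBcard B (Fc x 𝓕) rfl (Fc_subset hsub) h𝒝eq S₀ hS₀
      exact ssh_Fc_lift hxS₀ hssh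

lemma st_extremal_ssh {n : ℕ} : ∀ (k : ℕ) (A : Finset (Fin n)) (𝓕 : Finset (Finset (Fin n))),
    A.card = k → 𝓕 ⊆ A.powerset → (stG A 𝓕).card = 𝓕.card →
    ∀ S ∈ ShG A 𝓕, SSh 𝓕 S := by
  intro k
  induction k using Nat.strong_induction_on with
  | _ k ih =>
    intro A 𝓕 hk hsub hext S hS
    rw [mem_ShG] at hS
    by_cases hSA : S = A
    · subst hSA
      refine ⟨∅, Finset.disjoint_empty_left S, fun H hH => ?_⟩
      obtain ⟨F, hF, hFS⟩ := hS.2 H hH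
      have : F ∩ S = F := Finset.inter_eq_left.2 (Finset.mem_powerset.1 (hsub hF))
      rw [Finset.union_empty, ← hFS, this]
      exact hF
    · obtain ⟨x, hx, hxS⟩ := Finset.exists_of_ssubset (Finset.ssubset_iff_subset_ne.2 ⟨hS.1, hSA⟩)
      set B := A.erase x with hB
      have hBcard : B.card < k := by
        have h0 : 0 < k := hk ▸ Finset.card_pos.2 ⟨x, hx⟩
        rw [hB, Finset.card_erase_of_mem hx, hk]
        omega
      have hxB : x ∉ B := Finset.notMem_erase x A
      set V := stG B (Fd x 𝓕) ∪ (stG B (Fc x 𝓕)).image (fun S => insert x S) with hV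
      have hstV : stG A 𝓕 ⊆ V := stG_subset_union
      have hrd : (stG B (Fd x 𝓕)).card ≤ (Fd x 𝓕).card :=
        reverse_sauer B.card B _ rfl (Fd_subset hsub)
      have hrc : (stG B (Fc x 𝓕)).card ≤ (Fc x 𝓕).card :=
        reverse_sauer B.card B _ rfl (Fc_subset hsub)
      have hFdc : (Fd x 𝓕).card + (Fc x 𝓕).card = 𝓕.card := card_Fd_add_Fc x 𝓕
      have hVle : V.card ≤ (stG B (Fd x 𝓕)).card + (stG B (Fc x 𝓕)).card :=
        le_trans (Finset.card_union_le _ _) (Nat.add_le_add le_rfl Finset.card_image_le)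
      have hstVle : (stG A 𝓕).card ≤ V.card := Finset.card_le_card hstV
      have hVeq : V = stG A 𝓕 := by
        refine (Finset.eq_of_subset_of_card_le hstV ?_).symm
        omega
      have hdeq : (stG B (Fd x 𝓕)).card = (Fd x 𝓕).card := by omega
      -- S avoids x, so S is shattered by the trace family
      have hSB : S ⊆ B := Finset.subset_erase.2 ⟨hS.1, hxS⟩
      have hSsh : S ∈ ShG B (Fd x 𝓕) := mem_ShG.2 ⟨hSB, shatters_to_Fd hxS hS.2⟩
      have hSst : S ∈ stG B (Fd x 𝓕) :=
        mem_stG.2 ⟨hSB, ih B.card hBcard B (Fd x 𝓕) rfl (Fd_subset hsub) hdeq S hSsh⟩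
      have : S ∈ stG A 𝓕 := hVeq ▸ Finset.mem_union_left _ hSst
      exact (mem_stG.1 this).2

lemma subset_compl_iff_disj {n : ℕ} {I S : Finset (Fin n)} : I ⊆ Sᶜ ↔ Disjoint I S := by
  simp [Finset.subset_iff, Finset.disjoint_left, Finset.mem_compl]

lemma Sh_eq_ShG' {n : ℕ} (𝓕 : Finset (Finset (Fin n))) : Sh 𝓕 = ShG Finset.univ 𝓕 := by
  ext S
  simp [Sh, ShG, Finset.mem_filter, Finset.mem_powerset, Finset.subset_univ]

lemma st_eq_stG' {n : ℕ} (𝓕 : Finset (Finset (Fin n))) : st 𝓕 = stG Finset.univ 𝓕 := by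
  ext S
  simp only [st, stG, Finset.mem_filter, Finset.mem_powerset, Finset.subset_univ,
    Finset.mem_univ, true_and, StronglyShatters, SSh]
  constructor
  · rintro ⟨I, hI, h⟩; exact ⟨I, subset_compl_iff_disj.1 hI, h⟩
  · rintro ⟨I, hI, h⟩; exact ⟨I, subset_compl_iff_disj.2 hI, h⟩


end AuxBR

/-- Equality in the Sauer inequality holds iff equality holds in the reverse Sauer
inequality. -/
theorem sauer_extremal_iff_reverse_sauer_extremal (n : ℕ) (𝓕 : Finset (Finset (Fin n))) :
    (Sh 𝓕).card = 𝓕.card ↔ (st 𝓕).card = 𝓕.card := by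
  have hsub : 𝓕 ⊆ (Finset.univ : Finset (Fin n)).powerset :=
    fun F _ => Finset.mem_powerset.2 (Finset.subset_univ F)
  constructor
  · intro h
    have key := sh_extremal_ssh (Finset.univ : Finset (Fin n)).card Finset.univ 𝓕 rfl hsub
      (by rw [← Sh_eq_ShG']; exact h)
    have heq : stG Finset.univ 𝓕 = ShG Finset.univ 𝓕 :=
      Finset.Subset.antisymm (stG_subset_ShG _ _)
        (fun S hS => mem_stG.2 ⟨(mem_ShG.1 hS).1, key S hS⟩)
    rw [st_eq_stG', heq, ← Sh_eq_ShG']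
    exact h
  · intro h
    have key := st_extremal_ssh (Finset.univ : Finset (Fin n)).card Finset.univ 𝓕 rfl hsub
      (by rw [← st_eq_stG']; exact h)
    have heq : stG Finset.univ 𝓕 = ShG Finset.univ 𝓕 :=
      Finset.Subset.antisymm (stG_subset_ShG _ _)
        (fun S hS => mem_stG.2 ⟨(mem_ShG.1 hS).1, key S hS⟩)
    rw [← st_eq_stG'] at heq
    calc (Sh 𝓕).card = (st 𝓕).card := by rw [Sh_eq_ShG', ← heq]
      _ = 𝓕.card := h
end

section
/- Let F ⊆ 2^[n] be a set system, let i ∈ [n], and let F₀ = {F ∈ F : i ∉ F} and F₁ = {F \ {i} : F ∈ F, i ∈ F} be the standard subdivision of F with respect to i. Then |Sh(F)| ≥ |Sh(F₀)| + |Sh(F₁)|. -/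
open scoped symmDiff

lemma mem_Sh_iff {n : ℕ} (𝓖 : Finset (Finset (Fin n))) (S : Finset (Fin n)) :
    S ∈ Sh 𝓖 ↔ Shatters 𝓖 S := by
  simp [Sh]

/-- For the standard subdivision `𝓕₀, 𝓕₁` of `𝓕` with respect to `i`, we have
`|Sh(𝓕)| ≥ |Sh(𝓕₀)| + |Sh(𝓕₁)|`. -/
theorem Sh_card_standard_subdivision (n : ℕ) (𝓕 : Finset (Finset (Fin n))) (i : Fin n) :
    (Sh (𝓕.filter fun F => i ∉ F)).card +
      (Sh ((𝓕.filter fun F => i ∈ F).image fun F => F.erase i)).card ≤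
      (Sh 𝓕).card := by
  classical
  set 𝓕₀ := 𝓕.filter fun F => i ∉ F with h𝓕₀
  set 𝓕₁ := (𝓕.filter fun F => i ∈ F).image fun F => F.erase i with h𝓕₁
  set A := Sh 𝓕₀ with hA
  set B := Sh 𝓕₁ with hB
  -- i is not in any set shattered by 𝓕₀
  have hAi : ∀ S ∈ A, i ∉ S := by
    intro S hS hi
    rw [hA, mem_Sh_iff] at hS
    obtain ⟨F, hF, hFS⟩ := hS S Finset.Subset.rfl
    rw [h𝓕₀, Finset.mem_filter] at hF
    exact hF.2 (by rw [← hFS] at hi; exact (Finset.mem_inter.mp hi).1)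
  have hBi : ∀ S ∈ B, i ∉ S := by
    intro S hS hi
    rw [hB, mem_Sh_iff] at hS
    obtain ⟨G, hG, hGS⟩ := hS S Finset.Subset.rfl
    rw [h𝓕₁, Finset.mem_image] at hG
    obtain ⟨F, _, rfl⟩ := hG
    have : i ∈ F.erase i ∩ S := by rw [hGS]; exact hi
    exact (Finset.notMem_erase i F) (Finset.mem_inter.mp this).1
  -- A ⊆ Sh 𝓕
  have hAsub : A ⊆ Sh 𝓕 := by
    intro S hS
    rw [mem_Sh_iff]
    rw [hA, mem_Sh_iff] at hS
    intro T hT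
    obtain ⟨F, hF, hFS⟩ := hS T hT
    exact ⟨F, (Finset.mem_filter.mp hF).1, hFS⟩
  -- B ⊆ Sh 𝓕
  have hBsub : B ⊆ Sh 𝓕 := by
    intro S hS
    have hiS : i ∉ S := hBi S hS
    rw [mem_Sh_iff]
    rw [hB, mem_Sh_iff] at hS
    intro T hT
    obtain ⟨G, hG, hGS⟩ := hS T hT
    rw [h𝓕₁, Finset.mem_image] at hG
    obtain ⟨F, hF, rfl⟩ := hG
    refine ⟨F, (Finset.mem_filter.mp hF).1, ?_⟩
    rw [← hGS]
    ext x
    simp only [Finset.mem_inter, Finset.mem_erase]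
    constructor
    · rintro ⟨hx, hxS⟩
      exact ⟨⟨fun h => hiS (h ▸ hxS), hx⟩, hxS⟩
    · rintro ⟨⟨_, hx⟩, hxS⟩
      exact ⟨hx, hxS⟩
  -- insert i of intersection lands in Sh 𝓕
  have hCsub : ∀ S ∈ A ∩ B, insert i S ∈ Sh 𝓕 := by
    intro S hS
    rw [Finset.mem_inter] at hS
    have hiS : i ∉ S := hAi S hS.1
    have hS0 := (mem_Sh_iff _ _).mp hS.1
    have hS1 := (mem_Sh_iff _ _).mp hS.2
    rw [mem_Sh_iff]
    intro T hT
    by_cases hiT : i ∈ T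
    · obtain ⟨G, hG, hGS⟩ := hS1 (T.erase i) (by
        intro x hx
        rw [Finset.mem_erase] at hx
        rcases Finset.mem_insert.mp (hT hx.2) with h | h
        · exact absurd h hx.1
        · exact h)
      rw [h𝓕₁, Finset.mem_image] at hG
      obtain ⟨F, hF, rfl⟩ := hG
      rw [Finset.mem_filter] at hF
      refine ⟨F, hF.1, ?_⟩
      ext x
      simp only [Finset.mem_inter, Finset.mem_insert]
      constructor
      · rintro ⟨hxF, hx⟩
        rcases hx with rfl | hxS
        · exact hiT
        · have : x ∈ F.erase i ∩ S :=
            Finset.mem_inter.mpr ⟨Finset.mem_erase.mpr ⟨fun h => hiS (h ▸ hxS), hxF⟩, hxS⟩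
          rw [hGS] at this
          exact Finset.mem_of_mem_erase this
      · intro hxT
        by_cases hxi : x = i
        · subst hxi; exact ⟨hF.2, Or.inl rfl⟩
        · have : x ∈ F.erase i ∩ S := by
            rw [hGS]; exact Finset.mem_erase.mpr ⟨hxi, hxT⟩
          rw [Finset.mem_inter, Finset.mem_erase] at this
          exact ⟨this.1.2, Or.inr this.2⟩
    · obtain ⟨F, hF, hFS⟩ := hS0 T (by
        intro x hx
        rcases Finset.mem_insert.mp (hT hx) with rfl | h
        · exact absurd hx hiT
        · exact h)
      rw [Finset.mem_filter] at hF
      refine ⟨F, hF.1, ?_⟩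
      rw [← hFS]
      ext x
      simp only [Finset.mem_inter, Finset.mem_insert]
      constructor
      · rintro ⟨hxF, hx⟩
        rcases hx with rfl | hxS
        · exact absurd hxF hF.2
        · exact ⟨hxF, hxS⟩
      · rintro ⟨hxF, hxS⟩
        exact ⟨hxF, Or.inr hxS⟩
  -- counting
  set C := (A ∩ B).image (insert i) with hC
  have hCcard : C.card = (A ∩ B).card := by
    rw [hC]
    apply Finset.card_image_of_injOn
    intro S hS S' hS' h
    have hiS : i ∉ S := hAi S (Finset.mem_inter.mp hS).1
    have hiS' : i ∉ S' := hAi S' (Finset.mem_inter.mp hS').1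
    have := congrArg (Finset.erase · i) h
    simpa [Finset.erase_insert hiS, Finset.erase_insert hiS'] using this
  have hdisj : Disjoint (A ∪ B) C := by
    rw [Finset.disjoint_left]
    intro S hS hSC
    rw [hC, Finset.mem_image] at hSC
    obtain ⟨S', _, rfl⟩ := hSC
    rcases Finset.mem_union.mp hS with h | h
    · exact hAi _ h (Finset.mem_insert_self i S')
    · exact hBi _ h (Finset.mem_insert_self i S')
  have hsub : (A ∪ B) ∪ C ⊆ Sh 𝓕 := by
    intro S hS
    rcases Finset.mem_union.mp hS with h | h
    · rcases Finset.mem_union.mp h with h | h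
      · exact hAsub h
      · exact hBsub h
    · rw [hC, Finset.mem_image] at h
      obtain ⟨S', hS', rfl⟩ := h
      exact hCsub S' hS'
  calc A.card + B.card = (A ∪ B).card + (A ∩ B).card :=
        (Finset.card_union_add_card_inter A B).symm
    _ = (A ∪ B).card + C.card := by rw [hCcard]
    _ = ((A ∪ B) ∪ C).card := (Finset.card_union_of_disjoint hdisj).symm
    _ ≤ (Sh 𝓕).card := Finset.card_le_card hsub
end

section
/- If F ⊆ 2^[n] is shattering-extremal and i ∈ [n], then both parts F₀ = {F ∈ F : i ∉ F} and F₁ = {F \ {i} : F ∈ F, i ∈ F} of the standard subdivision of F with respect to i are shattering-extremal. -/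
open scoped symmDiff

lemma mem_Sh {n : ℕ} {𝓕 : Finset (Finset (Fin n))} {S : Finset (Fin n)} :
    S ∈ Sh 𝓕 ↔ Shatters 𝓕 S := by
  classical
  simp [Sh]

lemma shatters_avoid {n : ℕ} {𝓖 : Finset (Finset (Fin n))} {i : Fin n}
    (h : ∀ G ∈ 𝓖, i ∉ G) {S : Finset (Fin n)} (hS : S ∈ Sh 𝓖) : i ∉ S := by
  intro hiS
  obtain ⟨F, hF, hFS⟩ := mem_Sh.mp hS {i} (Finset.singleton_subset_iff.mpr hiS)
  have : i ∈ F ∩ S := hFS ▸ Finset.mem_singleton_self i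
  exact h F hF (Finset.mem_inter.mp this).1

lemma key_lemma {n : ℕ} (𝓕 : Finset (Finset (Fin n))) (i : Fin n) :
    (Sh (𝓕.filter fun F => i ∉ F) ∪
        Sh ((𝓕.filter fun F => i ∈ F).image fun F => F.erase i)).card
      + (Sh (𝓕.filter fun F => i ∉ F) ∩
        Sh ((𝓕.filter fun F => i ∈ F).image fun F => F.erase i)).card
      ≤ (Sh 𝓕).card := by
  classical
  set 𝓐 := 𝓕.filter fun F => i ∉ F with hA
  set 𝓑 := (𝓕.filter fun F => i ∈ F).image fun F => F.erase i with hB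
  have hAavoid : ∀ G ∈ 𝓐, i ∉ G := fun G hG => (Finset.mem_filter.mp hG).2
  have hBavoid : ∀ G ∈ 𝓑, i ∉ G := by
    intro G hG
    obtain ⟨F, _, rfl⟩ := Finset.mem_image.mp hG
    exact Finset.notMem_erase i F
  have hUavoid : ∀ S ∈ Sh 𝓐 ∪ Sh 𝓑, i ∉ S := by
    intro S hS
    rcases Finset.mem_union.mp hS with h | h
    exacts [shatters_avoid hAavoid h, shatters_avoid hBavoid h]
  have hU : Sh 𝓐 ∪ Sh 𝓑 ⊆ Sh 𝓕 := by
    intro S hS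
    have hiS := hUavoid S hS
    rw [mem_Sh]
    intro T hT
    rcases Finset.mem_union.mp hS with h | h
    · obtain ⟨F, hF, hFS⟩ := mem_Sh.mp h T hT
      exact ⟨F, (Finset.mem_filter.mp hF).1, hFS⟩
    · obtain ⟨G, hG, hGS⟩ := mem_Sh.mp h T hT
      obtain ⟨F, hF, rfl⟩ := Finset.mem_image.mp hG
      refine ⟨F, (Finset.mem_filter.mp hF).1, ?_⟩
      rw [← hGS]
      ext a
      simp only [Finset.mem_inter, Finset.mem_erase]
      constructor
      · rintro ⟨haF, haS⟩
        exact ⟨⟨fun h => hiS (h ▸ haS), haF⟩, haS⟩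
      · rintro ⟨⟨_, haF⟩, haS⟩
        exact ⟨haF, haS⟩
  have hI : ∀ S ∈ Sh 𝓐 ∩ Sh 𝓑, insert i S ∈ Sh 𝓕 := by
    intro S hS
    obtain ⟨hSA, hSB⟩ := Finset.mem_inter.mp hS
    have hiS : i ∉ S := shatters_avoid hAavoid hSA
    rw [mem_Sh]
    intro T hT
    by_cases hiT : i ∈ T
    · have hT' : T.erase i ⊆ S := by
        intro a ha
        obtain ⟨hne, haT⟩ := Finset.mem_erase.mp ha
        exact (Finset.mem_insert.mp (hT haT)).resolve_left hne
      obtain ⟨G, hG, hGS⟩ := mem_Sh.mp hSB (T.erase i) hT'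
      obtain ⟨F, hF, rfl⟩ := Finset.mem_image.mp hG
      obtain ⟨hF𝓕, hiF⟩ := Finset.mem_filter.mp hF
      refine ⟨F, hF𝓕, ?_⟩
      ext a
      simp only [Finset.mem_inter, Finset.mem_insert]
      constructor
      · rintro ⟨haF, haS⟩
        rcases haS with rfl | haS
        · exact hiT
        · have hmem : a ∈ F.erase i ∩ S :=
            Finset.mem_inter.mpr ⟨Finset.mem_erase.mpr ⟨fun h => hiS (h ▸ haS), haF⟩, haS⟩
          rw [hGS] at hmem
          exact (Finset.mem_erase.mp hmem).2
      · intro haT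
        by_cases hai : a = i
        · exact ⟨hai ▸ hiF, Or.inl hai⟩
        · have hmem : a ∈ T.erase i := Finset.mem_erase.mpr ⟨hai, haT⟩
          rw [← hGS] at hmem
          obtain ⟨h1, h2⟩ := Finset.mem_inter.mp hmem
          exact ⟨(Finset.mem_erase.mp h1).2, Or.inr h2⟩
    · have hT' : T ⊆ S := by
        intro a ha
        exact (Finset.mem_insert.mp (hT ha)).resolve_left (fun h => hiT (h ▸ ha))
      obtain ⟨F, hF, hFS⟩ := mem_Sh.mp hSA T hT'
      obtain ⟨hF𝓕, hiF⟩ := Finset.mem_filter.mp hF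
      refine ⟨F, hF𝓕, ?_⟩
      rw [Finset.inter_insert_of_notMem hiF, hFS]
  have hcard_img : ((Sh 𝓐 ∩ Sh 𝓑).image (insert i)).card = (Sh 𝓐 ∩ Sh 𝓑).card := by
    apply Finset.card_image_of_injOn
    intro S hS S' hS' hEq
    have h1 : i ∉ S := shatters_avoid hAavoid (Finset.mem_inter.mp hS).1
    have h2 : i ∉ S' := shatters_avoid hAavoid (Finset.mem_inter.mp hS').1
    rw [← Finset.erase_insert h1, ← Finset.erase_insert h2, hEq]
  have hdisj : Disjoint (Sh 𝓐 ∪ Sh 𝓑) ((Sh 𝓐 ∩ Sh 𝓑).image (insert i)) := by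
    rw [Finset.disjoint_left]
    intro S hS hS'
    obtain ⟨S', _, rfl⟩ := Finset.mem_image.mp hS'
    exact hUavoid _ hS (Finset.mem_insert_self i S')
  calc (Sh 𝓐 ∪ Sh 𝓑).card + (Sh 𝓐 ∩ Sh 𝓑).card
      = ((Sh 𝓐 ∪ Sh 𝓑) ∪ (Sh 𝓐 ∩ Sh 𝓑).image (insert i)).card := by
        rw [Finset.card_union_of_disjoint hdisj, hcard_img]
    _ ≤ (Sh 𝓕).card := by
        apply Finset.card_le_card
        apply Finset.union_subset hU
        intro S hS
        obtain ⟨S', hS', rfl⟩ := Finset.mem_image.mp hS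
        exact hI S' hS'

lemma pajor_aux {n : ℕ} (N : ℕ) :
    ∀ 𝓕 : Finset (Finset (Fin n)), 𝓕.card ≤ N → 𝓕.card ≤ (Sh 𝓕).card := by
  induction N with
  | zero => intro 𝓕 h; omega
  | succ N ih =>
    intro 𝓕 hcard
    rcases Nat.lt_or_ge 𝓕.card (N + 1) with hlt | hge
    · exact ih 𝓕 (Nat.lt_succ_iff.mp hlt)
    by_cases h1 : 𝓕.card ≤ 1
    · rcases Finset.eq_empty_or_nonempty 𝓕 with rfl | ⟨F, hF⟩
      · simp
      · have hmem : (∅ : Finset (Fin n)) ∈ Sh 𝓕 := by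
          rw [mem_Sh]
          intro T hT
          refine ⟨F, hF, ?_⟩
          rw [Finset.subset_empty.mp hT, Finset.inter_empty]
        have := Finset.card_pos.mpr ⟨(∅ : Finset (Fin n)), hmem⟩
        omega
    · obtain ⟨F, hF, G, hG, hFG⟩ := Finset.one_lt_card.mp (not_le.mp h1)
      have hkey : ∃ i : Fin n, ∃ F' ∈ 𝓕, i ∈ F' ∧ ∃ G' ∈ 𝓕, i ∉ G' := by
        have hns : ¬ F ⊆ G ∨ ¬ G ⊆ F := by
          by_contra hc
          push_neg at hc
          exact hFG (Finset.Subset.antisymm hc.1 hc.2)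
        rcases hns with hns | hns
        · obtain ⟨i, hiF, hiG⟩ := Finset.not_subset.mp hns
          exact ⟨i, F, hF, hiF, G, hG, hiG⟩
        · obtain ⟨i, hiG, hiF⟩ := Finset.not_subset.mp hns
          exact ⟨i, G, hG, hiG, F, hF, hiF⟩
      obtain ⟨i, F', hF', hiF', G', hG', hiG'⟩ := hkey
      set 𝓐 := 𝓕.filter fun F => i ∉ F with hA
      set 𝓑 := (𝓕.filter fun F => i ∈ F).image fun F => F.erase i with hB
      have hAlt : 𝓐.card < 𝓕.card :=
        Finset.card_lt_card (Finset.filter_ssubset.mpr ⟨F', hF', by simp [hiF']⟩)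
      have hBcard : 𝓑.card = (𝓕.filter fun F => i ∈ F).card := by
        apply Finset.card_image_of_injOn
        intro S hS S' hS' hEq
        have h1 : i ∈ S := (Finset.mem_filter.mp hS).2
        have h2 : i ∈ S' := (Finset.mem_filter.mp hS').2
        have hEq' : S.erase i = S'.erase i := hEq
        rw [← Finset.insert_erase h1, ← Finset.insert_erase h2, hEq']
      have hflt : (𝓕.filter fun F => i ∈ F).card < 𝓕.card :=
        Finset.card_lt_card (Finset.filter_ssubset.mpr ⟨G', hG', hiG'⟩)
      have hsum : (𝓕.filter fun F => i ∈ F).card + 𝓐.card = 𝓕.card :=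
        Finset.card_filter_add_card_filter_not (fun F => i ∈ F)
      have ihA := ih 𝓐 (by omega)
      have ihB := ih 𝓑 (by omega)
      have hk := key_lemma 𝓕 i
      have hui := Finset.card_union_add_card_inter (Sh 𝓐) (Sh 𝓑)
      rw [← hA, ← hB] at hk
      omega

lemma pajor_s6 {n : ℕ} (𝓕 : Finset (Finset (Fin n))) : 𝓕.card ≤ (Sh 𝓕).card :=
  pajor_aux 𝓕.card 𝓕 le_rfl


/-- Both parts of the standard subdivision of a shattering-extremal family are
shattering-extremal. -/
theorem standard_subdivision_extremal (n : ℕ) (𝓕 : Finset (Finset (Fin n)))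
    (h : Extremal 𝓕) (i : Fin n) :
    Extremal (𝓕.filter fun F => i ∉ F) ∧
      Extremal ((𝓕.filter fun F => i ∈ F).image fun F => F.erase i) := by
  classical
  set 𝓐 := 𝓕.filter fun F => i ∉ F with hA
  set 𝓑 := (𝓕.filter fun F => i ∈ F).image fun F => F.erase i with hB
  have hBcard : 𝓑.card = (𝓕.filter fun F => i ∈ F).card := by
    apply Finset.card_image_of_injOn
    intro S hS S' hS' hEq
    have h1 : i ∈ S := (Finset.mem_filter.mp hS).2
    have h2 : i ∈ S' := (Finset.mem_filter.mp hS').2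
    have hEq' : S.erase i = S'.erase i := hEq
    rw [← Finset.insert_erase h1, ← Finset.insert_erase h2, hEq']
  have hsum : (𝓕.filter fun F => i ∈ F).card + 𝓐.card = 𝓕.card :=
    Finset.card_filter_add_card_filter_not (fun F => i ∈ F)
  have pA := pajor_s6 𝓐
  have pB := pajor_s6 𝓑
  have hk := key_lemma 𝓕 i
  have hui := Finset.card_union_add_card_inter (Sh 𝓐) (Sh 𝓑)
  rw [← hA, ← hB] at hk
  unfold Extremal at h ⊢
  omega
end

section
/- If F ⊆ 2^[n] is shattering-extremal, then the inclusion graph of F is isometrically embedded in the hypercube: for all A, B ∈ F there exist sets A = C₀, C₁, ..., C_k = B, all belonging to F, with k = |A △ B| and |C_{j-1} △ C_j| = 1 for every j = 1, ..., k. -/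
open scoped symmDiff

namespace ExtAux

open Finset

variable {n : ℕ}

lemma mem_Sh {𝓕 : Finset (Finset (Fin n))} {S : Finset (Fin n)} :
    S ∈ Sh 𝓕 ↔ _root_.Shatters 𝓕 S := by
  classical
  simp [Sh]

lemma shatters_mono {𝓕 𝓖 : Finset (Finset (Fin n))} (h : 𝓕 ⊆ 𝓖) {S : Finset (Fin n)}
    (hS : _root_.Shatters 𝓕 S) : _root_.Shatters 𝓖 S := by
  intro T hT
  obtain ⟨F, hF, hFS⟩ := hS T hT
  exact ⟨F, h hF, hFS⟩

lemma Sh_mono {𝓕 𝓖 : Finset (Finset (Fin n))} (h : 𝓕 ⊆ 𝓖) : Sh 𝓕 ⊆ Sh 𝓖 := by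
  intro S hS
  exact mem_Sh.2 (shatters_mono h (mem_Sh.1 hS))

lemma empty_mem_Sh {𝓕 : Finset (Finset (Fin n))} (h : 𝓕.Nonempty) : ∅ ∈ Sh 𝓕 := by
  refine mem_Sh.2 fun T hT => ?_
  obtain ⟨F, hF⟩ := h
  rw [Finset.subset_empty] at hT
  exact ⟨F, hF, by simp [hT]⟩

lemma nonempty_of_shatters {𝓕 : Finset (Finset (Fin n))} {S : Finset (Fin n)}
    (h : _root_.Shatters 𝓕 S) : 𝓕.Nonempty := by
  obtain ⟨F, hF, -⟩ := h ∅ (empty_subset _)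
  exact ⟨F, hF⟩

def fam0 (𝓕 : Finset (Finset (Fin n))) (y : Fin n) : Finset (Finset (Fin n)) :=
  𝓕.filter fun X => y ∉ X

def fam1 (𝓕 : Finset (Finset (Fin n))) (y : Fin n) : Finset (Finset (Fin n)) :=
  (𝓕.filter fun X => y ∈ X).image fun X => X.erase y

lemma mem_fam0 {𝓕 : Finset (Finset (Fin n))} {y : Fin n} {X : Finset (Fin n)} :
    X ∈ fam0 𝓕 y ↔ X ∈ 𝓕 ∧ y ∉ X := by simp [fam0]

lemma mem_fam1 {𝓕 : Finset (Finset (Fin n))} {y : Fin n} {X : Finset (Fin n)} :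
    X ∈ fam1 𝓕 y ↔ y ∉ X ∧ insert y X ∈ 𝓕 := by
  constructor
  · intro h
    simp only [fam1, mem_image, mem_filter] at h
    obtain ⟨F, ⟨hF, hyF⟩, rfl⟩ := h
    exact ⟨notMem_erase _ _, by rw [Finset.insert_erase hyF]; exact hF⟩
  · rintro ⟨hyX, hX⟩
    simp only [fam1, mem_image, mem_filter]
    exact ⟨insert y X, ⟨hX, mem_insert_self _ _⟩, by rw [Finset.erase_insert hyX]⟩

lemma card_fam_split (𝓕 : Finset (Finset (Fin n))) (y : Fin n) :
    𝓕.card = (fam0 𝓕 y).card + (fam1 𝓕 y).card := by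
  have h1 : (fam1 𝓕 y).card = (𝓕.filter fun X => y ∈ X).card := by
    apply Finset.card_image_of_injOn
    intro X hX Y hY hXY
    rw [mem_coe, mem_filter] at hX hY
    simp only at hXY
    rw [← Finset.insert_erase hX.2, ← Finset.insert_erase hY.2, hXY]
  rw [h1]
  have := Finset.card_filter_add_card_filter_not (s := 𝓕) (p := fun X => y ∈ X)
  simp only [fam0]
  omega
lemma shatters_avoid {𝓗 : Finset (Finset (Fin n))} {y : Fin n} {S : Finset (Fin n)}
    (hm : ∀ X ∈ 𝓗, y ∉ X) (hS : _root_.Shatters 𝓗 S) : y ∉ S := by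
  intro hyS
  obtain ⟨F, hF, hFS⟩ := hS S Finset.Subset.rfl
  have : y ∈ F ∩ S := by rw [hFS]; exact hyS
  exact hm F hF (Finset.mem_inter.1 this).1

lemma fam0_avoid {𝓕 : Finset (Finset (Fin n))} {y : Fin n} : ∀ X ∈ fam0 𝓕 y, y ∉ X :=
  fun _ hX => (mem_fam0.1 hX).2

lemma fam1_avoid {𝓕 : Finset (Finset (Fin n))} {y : Fin n} : ∀ X ∈ fam1 𝓕 y, y ∉ X :=
  fun _ hX => (mem_fam1.1 hX).1

lemma shatters_fam0_sub {𝓕 : Finset (Finset (Fin n))} {y : Fin n} {S : Finset (Fin n)}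
    (h : _root_.Shatters (fam0 𝓕 y) S) : _root_.Shatters 𝓕 S :=
  shatters_mono (Finset.filter_subset _ _) h

lemma shatters_union_sub {𝓕 : Finset (Finset (Fin n))} {y : Fin n} {S : Finset (Fin n)}
    (h : _root_.Shatters (fam0 𝓕 y ∪ fam1 𝓕 y) S) : _root_.Shatters 𝓕 S := by
  have hyS : y ∉ S := shatters_avoid (fun X hX => by
    rcases Finset.mem_union.1 hX with h' | h'
    · exact fam0_avoid X h'
    · exact fam1_avoid X h') h
  intro T hT
  obtain ⟨W, hW, hWS⟩ := h T hT
  rcases Finset.mem_union.1 hW with h' | h'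
  · exact ⟨W, (mem_fam0.1 h').1, hWS⟩
  · refine ⟨insert y W, (mem_fam1.1 h').2, ?_⟩
    rw [Finset.insert_inter_of_notMem hyS, hWS]

lemma shatters_fam1_sub {𝓕 : Finset (Finset (Fin n))} {y : Fin n} {S : Finset (Fin n)}
    (h : _root_.Shatters (fam1 𝓕 y) S) : _root_.Shatters 𝓕 S := by
  have h' : _root_.Shatters (fam0 𝓕 y ∪ fam1 𝓕 y) S :=
    shatters_mono Finset.subset_union_right h
  exact shatters_union_sub h'

lemma shatters_insert {𝓕 : Finset (Finset (Fin n))} {y : Fin n} {S : Finset (Fin n)}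
    (h0 : _root_.Shatters (fam0 𝓕 y) S) (h1 : _root_.Shatters (fam1 𝓕 y) S) :
    _root_.Shatters 𝓕 (insert y S) := by
  have hyS : y ∉ S := shatters_avoid fam0_avoid h0
  intro T hT
  by_cases hyT : y ∈ T
  · have hTS : T.erase y ⊆ S := by
      intro a ha
      have := hT (Finset.mem_of_mem_erase ha)
      rcases Finset.mem_insert.1 this with h' | h'
      · exact absurd h' (Finset.ne_of_mem_erase ha)
      · exact h'
    obtain ⟨W, hW, hWS⟩ := h1 (T.erase y) hTS
    refine ⟨insert y W, (mem_fam1.1 hW).2, ?_⟩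
    have hii : insert y W ∩ insert y S = insert y (W ∩ S) := by
      ext a; simp only [Finset.mem_insert, Finset.mem_inter]; tauto
    rw [hii, hWS, Finset.insert_erase hyT]
  · have hTS : T ⊆ S := by
      intro a ha
      rcases Finset.mem_insert.1 (hT ha) with h' | h'
      · exact absurd (h' ▸ ha) hyT
      · exact h'
    obtain ⟨F, hF, hFS⟩ := h0 T hTS
    have hyF : y ∉ F := (mem_fam0.1 hF).2
    refine ⟨F, (mem_fam0.1 hF).1, ?_⟩
    rw [Finset.inter_insert_of_notMem hyF, hFS]
/-- The partition of shattered sets used in Pajor-type counting. -/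
noncomputable def parts (𝓕 : Finset (Finset (Fin n))) (y : Fin n) : Finset (Finset (Fin n)) :=
  (Sh (fam0 𝓕 y) ∪ Sh (fam1 𝓕 y)) ∪ (Sh (fam0 𝓕 y) ∩ Sh (fam1 𝓕 y)).image (insert y)

lemma Sh_avoid {𝓗 : Finset (Finset (Fin n))} {y : Fin n} (hm : ∀ X ∈ 𝓗, y ∉ X)
    {S : Finset (Fin n)} (hS : S ∈ Sh 𝓗) : y ∉ S :=
  shatters_avoid hm (mem_Sh.1 hS)

lemma parts_subset (𝓕 : Finset (Finset (Fin n))) (y : Fin n) : parts 𝓕 y ⊆ Sh 𝓕 := by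
  intro S hS
  rcases Finset.mem_union.1 hS with h | h
  · rcases Finset.mem_union.1 h with h' | h'
    · exact mem_Sh.2 (shatters_fam0_sub (mem_Sh.1 h'))
    · exact mem_Sh.2 (shatters_fam1_sub (mem_Sh.1 h'))
  · obtain ⟨S', hS', rfl⟩ := Finset.mem_image.1 h
    have h0 := mem_Sh.1 (Finset.mem_inter.1 hS').1
    have h1 := mem_Sh.1 (Finset.mem_inter.1 hS').2
    exact mem_Sh.2 (shatters_insert h0 h1)

lemma parts_card (𝓕 : Finset (Finset (Fin n))) (y : Fin n) :
    (parts 𝓕 y).card = (Sh (fam0 𝓕 y)).card + (Sh (fam1 𝓕 y)).card := by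
  have hdisj : Disjoint (Sh (fam0 𝓕 y) ∪ Sh (fam1 𝓕 y))
      ((Sh (fam0 𝓕 y) ∩ Sh (fam1 𝓕 y)).image (insert y)) := by
    rw [Finset.disjoint_left]
    intro S hS hS'
    have hyS : y ∉ S := by
      rcases Finset.mem_union.1 hS with h | h
      · exact Sh_avoid fam0_avoid h
      · exact Sh_avoid fam1_avoid h
    obtain ⟨S', _, rfl⟩ := Finset.mem_image.1 hS'
    exact hyS (Finset.mem_insert_self _ _)
  have himg : ((Sh (fam0 𝓕 y) ∩ Sh (fam1 𝓕 y)).image (insert y)).card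
      = (Sh (fam0 𝓕 y) ∩ Sh (fam1 𝓕 y)).card := by
    apply Finset.card_image_of_injOn
    intro S hS S' hS' hSS'
    rw [Finset.mem_coe, Finset.mem_inter] at hS hS'
    have h1 : y ∉ S := Sh_avoid fam0_avoid hS.1
    have h2 : y ∉ S' := Sh_avoid fam0_avoid hS'.1
    rw [← Finset.erase_insert h1, ← Finset.erase_insert h2, hSS']
  rw [parts, Finset.card_union_of_disjoint hdisj, himg,
    Finset.card_union_add_card_inter]

lemma subset_sup {𝓕 : Finset (Finset (Fin n))} {X : Finset (Fin n)} (hX : X ∈ 𝓕) :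
    X ⊆ 𝓕.sup id := Finset.le_sup (f := id) hX

lemma sup_fam0 (𝓕 : Finset (Finset (Fin n))) (y : Fin n) :
    (fam0 𝓕 y).sup id ⊆ (𝓕.sup id).erase y := by
  refine Finset.le_iff_subset.1 (Finset.sup_le fun X hX => ?_)
  rw [mem_fam0] at hX
  exact Finset.le_iff_subset.2 (Finset.subset_erase.2 ⟨subset_sup hX.1, hX.2⟩)

lemma sup_fam1 (𝓕 : Finset (Finset (Fin n))) (y : Fin n) :
    (fam1 𝓕 y).sup id ⊆ (𝓕.sup id).erase y := by
  refine Finset.le_iff_subset.1 (Finset.sup_le fun X hX => ?_)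
  rw [mem_fam1] at hX
  refine Finset.le_iff_subset.2 (Finset.subset_erase.2 ⟨?_, hX.1⟩)
  exact (Finset.subset_insert _ _).trans (subset_sup hX.2)

lemma pajor_base {𝓕 : Finset (Finset (Fin n))} (h : 𝓕.sup id = ∅) :
    𝓕.card ≤ (Sh 𝓕).card := by
  rcases Finset.eq_empty_or_nonempty 𝓕 with rfl | hne
  · simp
  · have h1 : 𝓕 ⊆ {∅} := by
      intro X hX
      have : X ⊆ ∅ := h ▸ subset_sup hX
      simp [Finset.subset_empty.1 this]
    have h2 : 𝓕.card ≤ 1 := by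
      calc 𝓕.card ≤ ({∅} : Finset (Finset (Fin n))).card := Finset.card_le_card h1
        _ = 1 := Finset.card_singleton _
    have h3 : 1 ≤ (Sh 𝓕).card := Finset.card_pos.2 ⟨∅, empty_mem_Sh hne⟩
    omega

lemma pajor : ∀ (N : ℕ) (𝓕 : Finset (Finset (Fin n))), (𝓕.sup id).card ≤ N →
    𝓕.card ≤ (Sh 𝓕).card := by
  intro N
  induction N with
  | zero =>
    intro 𝓕 h
    exact pajor_base (Finset.card_eq_zero.1 (Nat.le_zero.1 h))
  | succ N ih =>
    intro 𝓕 h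
    rcases Finset.eq_empty_or_nonempty (𝓕.sup id) with hsup | ⟨y, hy⟩
    · exact pajor_base hsup
    · have hb0 : ((fam0 𝓕 y).sup id).card ≤ N := by
        have := Finset.card_le_card (sup_fam0 𝓕 y)
        rw [Finset.card_erase_of_mem hy] at this
        omega
      have hb1 : ((fam1 𝓕 y).sup id).card ≤ N := by
        have := Finset.card_le_card (sup_fam1 𝓕 y)
        rw [Finset.card_erase_of_mem hy] at this
        omega
      calc 𝓕.card = (fam0 𝓕 y).card + (fam1 𝓕 y).card := card_fam_split 𝓕 y
        _ ≤ (Sh (fam0 𝓕 y)).card + (Sh (fam1 𝓕 y)).card :=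
            Nat.add_le_add (ih _ hb0) (ih _ hb1)
        _ = (parts 𝓕 y).card := (parts_card 𝓕 y).symm
        _ ≤ (Sh 𝓕).card := Finset.card_le_card (parts_subset 𝓕 y)

lemma pajor' (𝓕 : Finset (Finset (Fin n))) : 𝓕.card ≤ (Sh 𝓕).card :=
  pajor ((𝓕.sup id).card) 𝓕 le_rfl

lemma extremal_decomp {𝓕 : Finset (Finset (Fin n))} (hE : Extremal 𝓕) (y : Fin n) :
    Extremal (fam0 𝓕 y) ∧ Extremal (fam1 𝓕 y) ∧ Sh 𝓕 = parts 𝓕 y := by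
  have p0 := pajor' (fam0 𝓕 y)
  have p1 := pajor' (fam1 𝓕 y)
  have hsplit := card_fam_split 𝓕 y
  have hpc := parts_card 𝓕 y
  have hps := Finset.card_le_card (parts_subset 𝓕 y)
  have hE' : (Sh 𝓕).card = 𝓕.card := hE
  have e0 : (Sh (fam0 𝓕 y)).card = (fam0 𝓕 y).card := by omega
  have e1 : (Sh (fam1 𝓕 y)).card = (fam1 𝓕 y).card := by omega
  refine ⟨e0, e1, ?_⟩
  exact (Finset.eq_of_subset_of_card_le (parts_subset 𝓕 y) (by omega)).symm

lemma link_nonempty {𝓕 : Finset (Finset (Fin n))} (hE : Extremal 𝓕) (hem : ∅ ∈ 𝓕)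
    {F : Finset (Fin n)} (hF : F ∈ 𝓕) {y : Fin n} (hy : y ∈ F) :
    ∃ W, W ∈ fam0 𝓕 y ∧ W ∈ fam1 𝓕 y := by
  have hf0ne : (fam0 𝓕 y).Nonempty := ⟨∅, mem_fam0.2 ⟨hem, Finset.notMem_empty _⟩⟩
  have hf1ne : (fam1 𝓕 y).Nonempty := by
    refine ⟨F.erase y, mem_fam1.2 ⟨Finset.notMem_erase _ _, ?_⟩⟩
    rw [Finset.insert_erase hy]; exact hF
  -- Sh of the union is contained in the union of Sh's
  have hU : Sh (fam0 𝓕 y ∪ fam1 𝓕 y) ⊆ Sh (fam0 𝓕 y) ∪ Sh (fam1 𝓕 y) := by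
    intro S hS
    have hSh := mem_Sh.1 hS
    have hyS : y ∉ S := shatters_avoid (fun X hX => by
      rcases Finset.mem_union.1 hX with h' | h'
      · exact fam0_avoid X h'
      · exact fam1_avoid X h') hSh
    have hS𝓕 : S ∈ Sh 𝓕 := mem_Sh.2 (shatters_union_sub hSh)
    have hparts := (extremal_decomp hE y).2.2
    rw [hparts, parts] at hS𝓕
    rcases Finset.mem_union.1 hS𝓕 with h' | h'
    · exact h'
    · obtain ⟨S', _, rfl⟩ := Finset.mem_image.1 h'
      exact absurd (Finset.mem_insert_self _ _) hyS
  have hI : Sh (fam0 𝓕 y ∩ fam1 𝓕 y) ⊆ Sh (fam0 𝓕 y) ∩ Sh (fam1 𝓕 y) :=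
    Finset.subset_inter (Sh_mono Finset.inter_subset_left)
      (Sh_mono Finset.inter_subset_right)
  -- counting
  have c1 : (fam0 𝓕 y ∪ fam1 𝓕 y).card + (fam0 𝓕 y ∩ fam1 𝓕 y).card
      = (fam0 𝓕 y).card + (fam1 𝓕 y).card := Finset.card_union_add_card_inter _ _
  have c2 : (Sh (fam0 𝓕 y) ∪ Sh (fam1 𝓕 y)).card + (Sh (fam0 𝓕 y) ∩ Sh (fam1 𝓕 y)).card
      = (Sh (fam0 𝓕 y)).card + (Sh (fam1 𝓕 y)).card := Finset.card_union_add_card_inter _ _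
  have pU := pajor' (fam0 𝓕 y ∪ fam1 𝓕 y)
  have pI := pajor' (fam0 𝓕 y ∩ fam1 𝓕 y)
  have mU := Finset.card_le_card hU
  have mI := Finset.card_le_card hI
  have e0 := (extremal_decomp hE y).1
  have e1 := (extremal_decomp hE y).2.1
  have hE0 : (Sh (fam0 𝓕 y)).card = (fam0 𝓕 y).card := e0
  have hE1 : (Sh (fam1 𝓕 y)).card = (fam1 𝓕 y).card := e1
  have hIcard : (Sh (fam0 𝓕 y ∩ fam1 𝓕 y)).card = (Sh (fam0 𝓕 y) ∩ Sh (fam1 𝓕 y)).card := by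
    omega
  have hIeq : Sh (fam0 𝓕 y ∩ fam1 𝓕 y) = Sh (fam0 𝓕 y) ∩ Sh (fam1 𝓕 y) :=
    Finset.eq_of_subset_of_card_le hI (le_of_eq hIcard.symm)
  have hemI : ∅ ∈ Sh (fam0 𝓕 y ∩ fam1 𝓕 y) := by
    rw [hIeq]
    exact Finset.mem_inter.2 ⟨empty_mem_Sh hf0ne, empty_mem_Sh hf1ne⟩
  obtain ⟨W, hW, -⟩ := (mem_Sh.1 hemI) ∅ (Finset.empty_subset _)
  exact ⟨W, Finset.mem_inter.1 hW⟩
/-! ### Translation -/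

def tfam (A : Finset (Fin n)) (𝓕 : Finset (Finset (Fin n))) : Finset (Finset (Fin n)) :=
  𝓕.image fun X => A ∆ X

lemma symmDiff_cancel_fin (A X : Finset (Fin n)) : A ∆ (A ∆ X) = X :=
  symmDiff_symmDiff_cancel_left A X

lemma mem_tfam {A : Finset (Fin n)} {𝓕 : Finset (Finset (Fin n))} {X : Finset (Fin n)} :
    X ∈ tfam A 𝓕 ↔ A ∆ X ∈ 𝓕 := by
  constructor
  · intro h
    obtain ⟨F, hF, rfl⟩ := Finset.mem_image.1 h
    rw [symmDiff_cancel_fin]; exact hF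
  · intro h
    exact Finset.mem_image.2 ⟨A ∆ X, h, symmDiff_cancel_fin A X⟩

lemma card_tfam (A : Finset (Fin n)) (𝓕 : Finset (Finset (Fin n))) :
    (tfam A 𝓕).card = 𝓕.card := by
  apply Finset.card_image_of_injOn
  intro X _ Y _ h
  have : A ∆ (A ∆ X) = A ∆ (A ∆ Y) := by simp only at h; rw [h]
  rwa [symmDiff_cancel_fin, symmDiff_cancel_fin] at this

lemma inter_symmDiff (A X S : Finset (Fin n)) : (A ∆ X) ∩ S = (A ∩ S) ∆ (X ∩ S) := by
  ext a
  simp only [Finset.mem_inter, Finset.mem_symmDiff]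
  tauto

lemma shatters_tfam_of {A : Finset (Fin n)} {𝓕 : Finset (Finset (Fin n))} {S : Finset (Fin n)}
    (h : _root_.Shatters 𝓕 S) : _root_.Shatters (tfam A 𝓕) S := by
  intro T hT
  have hsub : (A ∩ S) ∆ T ⊆ S := by
    intro a ha
    rcases Finset.mem_symmDiff.1 ha with ⟨h1, _⟩ | ⟨h1, _⟩
    · exact (Finset.mem_inter.1 h1).2
    · exact hT h1
  obtain ⟨F, hF, hFS⟩ := h ((A ∩ S) ∆ T) hsub
  refine ⟨A ∆ F, mem_tfam.2 (by rw [symmDiff_cancel_fin]; exact hF), ?_⟩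
  rw [inter_symmDiff, hFS, symmDiff_symmDiff_cancel_left]

lemma tfam_tfam (A : Finset (Fin n)) (𝓕 : Finset (Finset (Fin n))) :
    tfam A (tfam A 𝓕) = 𝓕 := by
  ext X
  rw [mem_tfam, mem_tfam, symmDiff_cancel_fin]

lemma shatters_tfam {A : Finset (Fin n)} {𝓕 : Finset (Finset (Fin n))} {S : Finset (Fin n)} :
    _root_.Shatters (tfam A 𝓕) S ↔ _root_.Shatters 𝓕 S := by
  constructor
  · intro h
    have h' : _root_.Shatters (tfam A (tfam A 𝓕)) S := shatters_tfam_of h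
    rwa [tfam_tfam] at h'
  · exact shatters_tfam_of

lemma Sh_tfam (A : Finset (Fin n)) (𝓕 : Finset (Finset (Fin n))) :
    Sh (tfam A 𝓕) = Sh 𝓕 := by
  ext S
  rw [mem_Sh, mem_Sh, shatters_tfam]

lemma extremal_tfam {A : Finset (Fin n)} {𝓕 : Finset (Finset (Fin n))}
    (h : Extremal 𝓕) : Extremal (tfam A 𝓕) := by
  unfold Extremal at h ⊢
  rw [Sh_tfam, card_tfam]
  exact h

lemma tfam_member_subset {A : Finset (Fin n)} {𝓕 : Finset (Finset (Fin n))}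
    {E : Finset (Fin n)} (hA : A ⊆ E) (hsup : 𝓕.sup id ⊆ E) :
    ∀ X ∈ tfam A 𝓕, X ⊆ E := by
  intro X hX
  obtain ⟨F, hF, rfl⟩ := Finset.mem_image.1 hX
  intro a ha
  rcases Finset.mem_symmDiff.1 ha with ⟨h1, _⟩ | ⟨h1, _⟩
  · exact hA h1
  · exact hsup (subset_sup hF h1)

/-! ### Geodesic paths -/

def Geo (𝓕 : Finset (Finset (Fin n))) (A B : Finset (Fin n)) : Prop :=
  ∃ C : ℕ → Finset (Fin n),
    C 0 = A ∧ C ((A ∆ B).card) = B ∧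
    (∀ j ≤ (A ∆ B).card, C j ∈ 𝓕) ∧
    (∀ j, 1 ≤ j → j ≤ (A ∆ B).card → ((C (j - 1)) ∆ (C j)).card = 1)

lemma geo_self {𝓕 : Finset (Finset (Fin n))} {A : Finset (Fin n)} (hA : A ∈ 𝓕) :
    Geo 𝓕 A A := by
  refine ⟨fun _ => A, rfl, rfl, fun _ _ => hA, fun j h1 h2 => ?_⟩
  rw [symmDiff_self] at h2
  simp at h2
  omega

lemma geo_mono {𝓕 𝓖 : Finset (Finset (Fin n))} (h : 𝓕 ⊆ 𝓖) {A B : Finset (Fin n)}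
    (hg : Geo 𝓕 A B) : Geo 𝓖 A B := by
  obtain ⟨C, h0, h1, h2, h3⟩ := hg
  exact ⟨C, h0, h1, fun j hj => h (h2 j hj), h3⟩

lemma insert_symmDiff_insert {y : Fin n} {A B : Finset (Fin n)} (hA : y ∉ A) (hB : y ∉ B) :
    (insert y A) ∆ (insert y B) = A ∆ B := by
  ext a
  by_cases hay : a = y
  · subst hay
    simp [Finset.mem_symmDiff, hA, hB]
  · simp [Finset.mem_symmDiff, Finset.mem_insert, hay]

lemma geo_insert {𝓗 𝓕 : Finset (Finset (Fin n))} {y : Fin n}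
    (hlift : ∀ X ∈ 𝓗, y ∉ X ∧ insert y X ∈ 𝓕) {A B : Finset (Fin n)}
    (hg : Geo 𝓗 A B) : Geo 𝓕 (insert y A) (insert y B) := by
  obtain ⟨C, h0, h1, h2, h3⟩ := hg
  have hyA : y ∉ A := h0 ▸ (hlift _ (h2 0 (Nat.zero_le _))).1
  have hyB : y ∉ B := h1 ▸ (hlift _ (h2 _ le_rfl)).1
  have hk : ((insert y A) ∆ (insert y B)).card = (A ∆ B).card := by
    rw [insert_symmDiff_insert hyA hyB]
  refine ⟨fun j => insert y (C j), show insert y (C 0) = insert y A by rw [h0],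
    show insert y (C _) = insert y B by rw [hk, h1], ?_, ?_⟩
  · intro j hj
    rw [hk] at hj
    exact (hlift _ (h2 j hj)).2
  · intro j hj1 hj2
    rw [hk] at hj2
    have hy1 : y ∉ C (j - 1) := (hlift _ (h2 _ (by omega))).1
    have hy2 : y ∉ C j := (hlift _ (h2 _ hj2)).1
    rw [insert_symmDiff_insert hy1 hy2]
    exact h3 j hj1 hj2

lemma symmDiff_symmDiff_left_cancel (A X Y : Finset (Fin n)) :
    (A ∆ X) ∆ (A ∆ Y) = X ∆ Y := by
  ext a
  simp only [Finset.mem_symmDiff]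
  tauto

lemma geo_translate {A : Finset (Fin n)} {𝓕 : Finset (Finset (Fin n))}
    {P Q : Finset (Fin n)} (hg : Geo (tfam A 𝓕) P Q) : Geo 𝓕 (A ∆ P) (A ∆ Q) := by
  obtain ⟨C, h0, h1, h2, h3⟩ := hg
  have hk : ((A ∆ P) ∆ (A ∆ Q)).card = (P ∆ Q).card := by
    rw [symmDiff_symmDiff_left_cancel]
  refine ⟨fun j => A ∆ (C j), show A ∆ (C 0) = A ∆ P by rw [h0],
    show A ∆ (C _) = A ∆ Q by rw [hk, h1], ?_, ?_⟩
  · intro j hj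
    rw [hk] at hj
    exact mem_tfam.1 (h2 j hj)
  · intro j hj1 hj2
    rw [hk] at hj2
    rw [symmDiff_symmDiff_left_cancel]
    exact h3 j hj1 hj2

lemma geo_cons {𝓕 : Finset (Finset (Fin n))} {A P B : Finset (Fin n)} (hA : A ∈ 𝓕)
    (hstep : (A ∆ P).card = 1) (hg : Geo 𝓕 P B) (hk : (A ∆ B).card = (P ∆ B).card + 1) :
    Geo 𝓕 A B := by
  obtain ⟨C, h0, h1, h2, h3⟩ := hg
  set m := (P ∆ B).card with hm
  refine ⟨fun j => if j = 0 then A else C (j - 1), by simp, ?_, ?_, ?_⟩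
  · show (if (A ∆ B).card = 0 then A else C ((A ∆ B).card - 1)) = B
    rw [hk, if_neg (by omega : ¬ ((P ∆ B).card + 1 = 0)), Nat.add_sub_cancel]
    exact h1
  · intro j hj
    by_cases hj0 : j = 0
    · simp [hj0, hA]
    · simp only [hj0, if_false]
      exact h2 (j - 1) (by omega)
  · intro j hj1 hj2
    rw [hk] at hj2
    by_cases hj1' : j = 1
    · subst hj1'
      simp only [Nat.sub_self, if_pos rfl, one_ne_zero, if_false]
      rw [h0]
      exact hstep
    · have e1 : ¬ (j - 1 = 0) := by omega
      have e0 : ¬ (j = 0) := by omega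
      simp only [e1, e0, if_false]
      exact h3 (j - 1) (by omega) (by omega)
lemma empty_symmDiff' (E : Finset (Fin n)) : (∅ : Finset (Fin n)) ∆ E = E := by
  ext a; simp [Finset.mem_symmDiff]

lemma symmDiff_empty' (E : Finset (Fin n)) : E ∆ (∅ : Finset (Fin n)) = E := by
  ext a; simp [Finset.mem_symmDiff]

lemma singleton_symmDiff {x : Fin n} {E : Finset (Fin n)} (hx : x ∈ E) :
    ({x} : Finset (Fin n)) ∆ E = E.erase x := by
  ext a
  by_cases hax : a = x
  · subst hax
    simp [Finset.mem_symmDiff, hx]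
  · simp [Finset.mem_symmDiff, Finset.mem_erase, hax]

lemma main_induction : ∀ (N : ℕ) (𝓕 : Finset (Finset (Fin n))), (𝓕.sup id).card ≤ N →
    Extremal 𝓕 → ∀ A ∈ 𝓕, ∀ B ∈ 𝓕, Geo 𝓕 A B := by
  intro N
  induction N with
  | zero =>
    intro 𝓕 h hE A hA B hB
    have hsup : 𝓕.sup id = ∅ := Finset.card_eq_zero.1 (Nat.le_zero.1 h)
    have hA' : A = ∅ := Finset.subset_empty.1 (hsup ▸ subset_sup hA)
    have hB' : B = ∅ := Finset.subset_empty.1 (hsup ▸ subset_sup hB)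
    rw [hA', hB']
    exact geo_self (hA' ▸ hA)
  | succ N ih =>
    intro 𝓕 hsupN hE A hA B hB
    by_cases hAB : A = B
    · subst hAB; exact geo_self hA
    by_cases hy : ∃ y ∈ 𝓕.sup id, y ∉ A ∆ B
    · obtain ⟨y, hysup, hyAB⟩ := hy
      have hb0 : ((fam0 𝓕 y).sup id).card ≤ N := by
        have := Finset.card_le_card (sup_fam0 𝓕 y)
        rw [Finset.card_erase_of_mem hysup] at this
        omega
      have hb1 : ((fam1 𝓕 y).sup id).card ≤ N := by
        have := Finset.card_le_card (sup_fam1 𝓕 y)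
        rw [Finset.card_erase_of_mem hysup] at this
        omega
      have hdec := extremal_decomp hE y
      by_cases hyA : y ∈ A
      · have hyB : y ∈ B := by
          by_contra h'
          exact hyAB (Finset.mem_symmDiff.2 (Or.inl ⟨hyA, h'⟩))
        have hA1 : A.erase y ∈ fam1 𝓕 y :=
          mem_fam1.2 ⟨Finset.notMem_erase _ _, by rw [Finset.insert_erase hyA]; exact hA⟩
        have hB1 : B.erase y ∈ fam1 𝓕 y :=
          mem_fam1.2 ⟨Finset.notMem_erase _ _, by rw [Finset.insert_erase hyB]; exact hB⟩
        have hg := ih (fam1 𝓕 y) hb1 hdec.2.1 _ hA1 _ hB1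
        have hg' := geo_insert (fun X hX => ⟨fam1_avoid X hX, (mem_fam1.1 hX).2⟩) hg
        rwa [Finset.insert_erase hyA, Finset.insert_erase hyB] at hg'
      · have hyB : y ∉ B := fun h' => hyAB (Finset.mem_symmDiff.2 (Or.inr ⟨h', hyA⟩))
        have hA0 : A ∈ fam0 𝓕 y := mem_fam0.2 ⟨hA, hyA⟩
        have hB0 : B ∈ fam0 𝓕 y := mem_fam0.2 ⟨hB, hyB⟩
        exact geo_mono (Finset.filter_subset _ _) (ih (fam0 𝓕 y) hb0 hdec.1 A hA0 B hB0)
    · push_neg at hy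
      have hEsup : 𝓕.sup id = A ∆ B := by
        apply Finset.Subset.antisymm
        · intro a ha; exact hy a ha
        · intro a ha
          rcases Finset.mem_symmDiff.1 ha with ⟨h1, _⟩ | ⟨h1, _⟩
          · exact subset_sup hA h1
          · exact subset_sup hB h1
      set E := A ∆ B with hEdef
      set 𝓖 := tfam A 𝓕 with h𝓖def
      have h𝓖E : Extremal 𝓖 := extremal_tfam hE
      have hA_sub : A ⊆ E := hEsup ▸ subset_sup hA
      have hmem𝓖 : ∀ X ∈ 𝓖, X ⊆ E :=
        tfam_member_subset hA_sub (le_of_eq hEsup)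
      have h0𝓖 : ∅ ∈ 𝓖 := mem_tfam.2 (by rw [symmDiff_empty']; exact hA)
      have hE𝓖 : E ∈ 𝓖 := mem_tfam.2 (by rw [hEdef, symmDiff_cancel_fin]; exact hB)
      have hEne : E.Nonempty := by
        rw [Finset.nonempty_iff_ne_empty]
        intro h'
        rw [hEdef] at h'
        exact hAB (by simpa [symmDiff_eq_bot] using h')
      have hcE : E.card ≤ N + 1 := by rw [← hEsup]; exact hsupN
      have hsup𝓖 : 𝓖.sup id ⊆ E :=
        Finset.le_iff_subset.1 (Finset.sup_le fun X hX => Finset.le_iff_subset.2 (hmem𝓖 X hX))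
      have hbound : ∀ z ∈ E, ((fam0 𝓖 z).sup id).card ≤ N ∧ ((fam1 𝓖 z).sup id).card ≤ N := by
        intro z hz
        have h1 : (fam0 𝓖 z).sup id ⊆ E.erase z :=
          (sup_fam0 𝓖 z).trans (Finset.erase_subset_erase _ hsup𝓖)
        have h2 : (fam1 𝓖 z).sup id ⊆ E.erase z :=
          (sup_fam1 𝓖 z).trans (Finset.erase_subset_erase _ hsup𝓖)
        have hc : (E.erase z).card = E.card - 1 := Finset.card_erase_of_mem hz
        have hpos : 0 < E.card := Finset.card_pos.2 ⟨z, hz⟩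
        constructor
        · have := Finset.card_le_card h1; omega
        · have := Finset.card_le_card h2; omega
      obtain ⟨y, hyE⟩ := hEne
      obtain ⟨W, hW0, hW1⟩ := link_nonempty h𝓖E h0𝓖 hE𝓖 hyE
      obtain ⟨x, hxE, hx𝓖⟩ : ∃ x, x ∈ E ∧ ({x} : Finset (Fin n)) ∈ 𝓖 := by
        rcases Finset.eq_empty_or_nonempty W with rfl | hWne
        · refine ⟨y, hyE, ?_⟩
          have := (mem_fam1.1 hW1).2
          simpa using this
        · have h0fam : ∅ ∈ fam0 𝓖 y := mem_fam0.2 ⟨h0𝓖, Finset.notMem_empty _⟩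
          have hg := ih (fam0 𝓖 y) (hbound y hyE).1 (extremal_decomp h𝓖E y).1 ∅ h0fam W hW0
          obtain ⟨C, hc0, hc1, hc2, hc3⟩ := hg
          have hk1 : 1 ≤ ((∅ : Finset (Fin n)) ∆ W).card := by
            rw [empty_symmDiff']
            exact Finset.card_pos.2 hWne
          have hC1 : C 1 ∈ fam0 𝓖 y := hc2 1 hk1
          have hstep := hc3 1 le_rfl hk1
          have e : (1 : ℕ) - 1 = 0 := rfl
          rw [e, hc0, empty_symmDiff'] at hstep
          obtain ⟨x, hx⟩ := Finset.card_eq_one.1 hstep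
          have hC1𝓖 : C 1 ∈ 𝓖 := Finset.filter_subset _ 𝓖 hC1
          refine ⟨x, ?_, hx ▸ hC1𝓖⟩
          have hsubE : C 1 ⊆ E := hmem𝓖 _ hC1𝓖
          rw [hx] at hsubE
          exact hsubE (Finset.mem_singleton_self x)
      have h1x : ∅ ∈ fam1 𝓖 x :=
        mem_fam1.2 ⟨Finset.notMem_empty _, by simpa using hx𝓖⟩
      have h2x : E.erase x ∈ fam1 𝓖 x :=
        mem_fam1.2 ⟨Finset.notMem_erase _ _, by rw [Finset.insert_erase hxE]; exact hE𝓖⟩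
      have hgx := ih (fam1 𝓖 x) (hbound x hxE).2 (extremal_decomp h𝓖E x).2.1 ∅ h1x (E.erase x) h2x
      have hgx' := geo_insert (fun X hX => ⟨fam1_avoid X hX, (mem_fam1.1 hX).2⟩) hgx
      have hie : insert x (∅ : Finset (Fin n)) = {x} := by simp
      rw [hie, Finset.insert_erase hxE] at hgx'
      have hgeoE : Geo 𝓖 ∅ E := by
        refine geo_cons h0𝓖 ?_ hgx' ?_
        · rw [empty_symmDiff', Finset.card_singleton]
        · rw [empty_symmDiff', singleton_symmDiff hxE, Finset.card_erase_of_mem hxE]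
          have hpos : 0 < E.card := Finset.card_pos.2 ⟨x, hxE⟩
          omega
      have hfin := geo_translate hgeoE
      rwa [symmDiff_empty', hEdef, symmDiff_cancel_fin] at hfin

end ExtAux

/-- The inclusion graph of a shattering-extremal family is isometrically embedded in
the hypercube: any two members are joined inside `𝓕` by a path of length `|A ∆ B|`
whose consecutive members differ in exactly one element. -/
theorem extremal_isometrically_embedded (n : ℕ) (𝓕 : Finset (Finset (Fin n)))
    (h : Extremal 𝓕) :
    ∀ A ∈ 𝓕, ∀ B ∈ 𝓕, ∃ C : ℕ → Finset (Fin n),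
      C 0 = A ∧ C ((A ∆ B).card) = B ∧
      (∀ j ≤ (A ∆ B).card, C j ∈ 𝓕) ∧
      (∀ j, 1 ≤ j → j ≤ (A ∆ B).card → ((C (j - 1)) ∆ (C j)).card = 1) := by
  intro A hA B hB
  obtain ⟨C, h0, h1, h2, h3⟩ :=
    ExtAux.main_induction ((𝓕.sup id).card) 𝓕 le_rfl h A hA B hB
  exact ⟨C, h0, h1, h2, h3⟩
end

section
/- Let F ⊆ 2^[n] and S ⊆ [n]. If there exist two distinct sets I₁, I₂ ⊆ [n] \ S with {H ∪ I₁ : H ⊆ S} ⊆ F and {H ∪ I₂ : H ⊆ S} ⊆ F, then there exists an element α ∈ [n] \ S such that F shatters S ∪ {α}. -/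
open scoped symmDiff

lemma aux_shatters (n : ℕ) (𝓕 : Finset (Finset (Fin n)))
    (S I₁ I₂ : Finset (Fin n)) (h₁ : I₁ ⊆ Sᶜ) (h₂ : I₂ ⊆ Sᶜ)
    (hI₁ : ∀ H ⊆ S, H ∪ I₁ ∈ 𝓕) (hI₂ : ∀ H ⊆ S, H ∪ I₂ ∈ 𝓕)
    (α : Fin n) (hα1 : α ∈ I₁) (hα2 : α ∉ I₂) :
    α ∉ S ∧ Shatters 𝓕 (insert α S) := by
  have hαS : α ∉ S := by simpa using h₁ hα1
  refine ⟨hαS, fun T hT => ?_⟩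
  have hHS : T ∩ S ⊆ S := Finset.inter_subset_right
  by_cases hαT : α ∈ T
  · refine ⟨T ∩ S ∪ I₁, hI₁ _ hHS, ?_⟩
    ext x
    simp only [Finset.mem_inter, Finset.mem_union, Finset.mem_insert]
    constructor
    · rintro ⟨h | hx1, hx⟩
      · tauto
      · rcases hx with rfl | hxS
        · exact hαT
        · exact absurd hxS (by simpa using h₁ hx1)
    · intro hxT
      have := hT hxT
      simp only [Finset.mem_insert] at this
      rcases this with rfl | hxS
      · exact ⟨Or.inr hα1, Or.inl rfl⟩
      · exact ⟨Or.inl ⟨hxT, hxS⟩, Or.inr hxS⟩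
  · refine ⟨T ∩ S ∪ I₂, hI₂ _ hHS, ?_⟩
    ext x
    simp only [Finset.mem_inter, Finset.mem_union, Finset.mem_insert]
    constructor
    · rintro ⟨h | hx2, hx⟩
      · tauto
      · rcases hx with rfl | hxS
        · exact absurd hx2 hα2
        · exact absurd hxS (by simpa using h₂ hx2)
    · intro hxT
      have := hT hxT
      simp only [Finset.mem_insert] at this
      rcases this with rfl | hxS
      · exact absurd hxT hαT
      · exact ⟨Or.inl ⟨hxT, hxS⟩, Or.inr hxS⟩

/-- If `S` is strongly shattered with two distinct witnesses, then some proper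
superset `S ∪ {α}` is shattered. -/
theorem shatters_insert_of_two_witnesses (n : ℕ) (𝓕 : Finset (Finset (Fin n)))
    (S I₁ I₂ : Finset (Fin n)) (h₁ : I₁ ⊆ Sᶜ) (h₂ : I₂ ⊆ Sᶜ) (hne : I₁ ≠ I₂)
    (hI₁ : ∀ H ⊆ S, H ∪ I₁ ∈ 𝓕) (hI₂ : ∀ H ⊆ S, H ∪ I₂ ∈ 𝓕) :
    ∃ α : Fin n, α ∉ S ∧ Shatters 𝓕 (insert α S) := by
  have : ∃ α, (α ∈ I₁ ∧ α ∉ I₂) ∨ (α ∈ I₂ ∧ α ∉ I₁) := by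
    by_contra h
    push_neg at h
    exact hne (Finset.ext fun a => ⟨(h a).1, (h a).2⟩)
  obtain ⟨α, hc⟩ := this
  rcases hc with ⟨ha1, ha2⟩ | ⟨ha2, ha1⟩
  · exact ⟨α, aux_shatters n 𝓕 S I₁ I₂ h₁ h₂ hI₁ hI₂ α ha1 ha2⟩
  · exact ⟨α, aux_shatters n 𝓕 S I₂ I₁ h₂ h₁ hI₂ hI₁ α ha2 ha1⟩
end

section
/- Let F ⊆ 2^[n] be shattering-extremal, let α ∈ [n] be an element not contained in any member of F (α ∉ supp(F)), and let W ∈ F. Then F ∪ {W ∪ {α}} is shattering-extremal, and its VC dimension is at most max(dim_VC(F), 1). -/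
open scoped symmDiff

/-- Step A: adding `W ∪ {α}` for `W ∈ 𝓕` and a new element `α ∉ supp 𝓕` keeps a
shattering-extremal family extremal, with VC dimension at most `max (dimVC 𝓕) 1`. -/
theorem stepA_extremal (n : ℕ) (𝓕 : Finset (Finset (Fin n))) (h : Extremal 𝓕)
    (α : Fin n) (hα : ∀ F ∈ 𝓕, α ∉ F) (W : Finset (Fin n)) (hW : W ∈ 𝓕) :
    Extremal (insert (W ∪ {α}) 𝓕) ∧
      dimVC (insert (W ∪ {α}) 𝓕) ≤ max (dimVC 𝓕) 1 := by
  classical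
  set G := W ∪ {α} with hGdef
  have hαW : α ∉ W := hα W hW
  have hGF : G ∉ 𝓕 := fun hG => hα G hG (by simp [hGdef])
  have hαSh : ({α} : Finset (Fin n)) ∉ Sh 𝓕 := by
    simp only [Sh, Finset.mem_filter, Finset.mem_univ, true_and]
    intro hs
    obtain ⟨F, hF, hFe⟩ := hs {α} (subset_refl _)
    have hm : α ∈ F ∩ ({α} : Finset (Fin n)) := by rw [hFe]; exact Finset.mem_singleton_self α
    exact hα F hF (Finset.mem_inter.1 hm).1
  have key : Sh (insert G 𝓕) = insert {α} (Sh 𝓕) := by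
    ext S
    simp only [Sh, Finset.mem_filter, Finset.mem_univ, true_and, Finset.mem_insert]
    constructor
    · intro hS
      by_cases hαS : α ∈ S
      · left
        refine Finset.Subset.antisymm ?_ (by simpa using hαS)
        intro x hx
        rw [Finset.mem_singleton]
        by_contra hxα
        obtain ⟨F1, hF1, he1⟩ := hS {α} (by simpa using hαS)
        obtain ⟨F2, hF2, he2⟩ := hS {α, x} (by
          intro y hy
          rcases Finset.mem_insert.1 hy with h' | h'
          · exact h' ▸ hαS
          · exact (Finset.mem_singleton.1 h') ▸ hx)
        have hF1G : F1 = G := by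
          rcases Finset.mem_insert.1 hF1 with h' | h'
          · exact h'
          · exfalso; apply hα F1 h'
            have hm : α ∈ F1 ∩ S := by rw [he1]; exact Finset.mem_singleton_self α
            exact (Finset.mem_inter.1 hm).1
        have hF2G : F2 = G := by
          rcases Finset.mem_insert.1 hF2 with h' | h'
          · exact h'
          · exfalso; apply hα F2 h'
            have hm : α ∈ F2 ∩ S := by rw [he2]; simp
            exact (Finset.mem_inter.1 hm).1
        have heq : ({α} : Finset (Fin n)) = {α, x} := by
          rw [← he1, ← he2, hF1G, hF2G]
        have : x ∈ ({α} : Finset (Fin n)) := by rw [heq]; simp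
        exact hxα (Finset.mem_singleton.1 this)
      · right
        intro T hT
        obtain ⟨F, hF, he⟩ := hS T hT
        rcases Finset.mem_insert.1 hF with h' | h'
        · refine ⟨W, hW, ?_⟩
          rw [← he, h']
          ext y
          simp only [hGdef, Finset.mem_inter, Finset.mem_union, Finset.mem_singleton]
          constructor
          · rintro ⟨hyW, hyS⟩; exact ⟨Or.inl hyW, hyS⟩
          · rintro ⟨hy, hyS⟩
            rcases hy with hy | hy
            · exact ⟨hy, hyS⟩
            · exact absurd (hy ▸ hyS) hαS
        · exact ⟨F, h', he⟩
    · intro hS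
      rcases hS with h' | h'
      · subst h'
        intro T hT
        rcases Finset.subset_singleton_iff.1 hT with h' | h'
        · refine ⟨W, Finset.mem_insert_of_mem hW, ?_⟩
          subst h'
          ext y
          simp only [Finset.mem_inter, Finset.mem_singleton, Finset.notMem_empty,
            iff_false, not_and]
          rintro hyW rfl; exact hαW hyW
        · refine ⟨G, Finset.mem_insert_self _ _, ?_⟩
          subst h'
          ext y
          simp only [hGdef, Finset.mem_inter, Finset.mem_union, Finset.mem_singleton]
          constructor
          · rintro ⟨_, h''⟩; exact h''
          · rintro rfl; exact ⟨Or.inr rfl, rfl⟩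
      · intro T hT
        obtain ⟨F, hF, he⟩ := h' T hT
        exact ⟨F, Finset.mem_insert_of_mem hF, he⟩
  constructor
  · unfold Extremal
    rw [key, Finset.card_insert_of_notMem hαSh,
      Finset.card_insert_of_notMem hGF, h]
  · unfold dimVC
    rw [key, Finset.sup_insert]
    simp only [Finset.card_singleton]
    exact sup_le (le_max_right _ _) (le_max_left _ _)
end
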